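/- arXiv:1604.04230 — 6 statements merged into one kernel-verified Lean document; each statement's English description precedes it below -/
import Mathlib

section
/- Let P ⊆ {0,1}^ℕ be a non-empty clopen set. Then every weakly (Kurtz) random sequence Z ∈ {0,1}^ℕ is multiply recurrent in P. -/
open MeasureTheory

/-- `σ` is a prefix of the infinite binary sequence `Z`. -/
def IsPrefixOf (σ : List Bool) (Z : ℕ → Bool) : Prop :=
  ∀ i : ℕ, i < σ.length → σ.getD i false = Z i

/-- The open subset `⟦S⟧` of Cantor space generated by a set of finite binary strings. -/
def openCl (S : Set (List Bool)) : Set (ℕ → Bool) :=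
  {Z | ∃ σ ∈ S, IsPrefixOf σ Z}

/-- A set of finite binary strings is computably enumerable. -/
def CEStrings (S : Set (List Bool)) : Prop :=
  ∃ f : ℕ → Option (List Bool), Computable f ∧ S = {σ | ∃ n, f n = some σ}

/-- `P` is a Π⁰₁ class: the complement of the open set generated by a c.e. set of strings. -/
def Pi01Class (P : Set (ℕ → Bool)) : Prop :=
  ∃ S : Set (List Bool), CEStrings S ∧ P = (openCl S)ᶜ

/-- The shift operator `T` on Cantor space: `T Z n = Z (n+1)`. -/
def shift (Z : ℕ → Bool) : ℕ → Bool := fun n => Z (n + 1)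

/-- `Z` is `k`-recurrent in `P`: for some `n ≥ 1`, `T^{n i} Z ∈ P` for all `1 ≤ i ≤ k`. -/
def KRecurrentIn (k : ℕ) (P : Set (ℕ → Bool)) (Z : ℕ → Bool) : Prop :=
  ∃ n : ℕ, 1 ≤ n ∧ ∀ i : ℕ, 1 ≤ i → i ≤ k → shift^[n * i] Z ∈ P

/-- `Z` is multiply recurrent in `P`: `k`-recurrent in `P` for every `k ≥ 1`. -/
def MultiplyRecurrentIn (P : Set (ℕ → Bool)) (Z : ℕ → Bool) : Prop :=
  ∀ k : ℕ, 1 ≤ k → KRecurrentIn k P Z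

/-- `μ` is the uniform (fair-coin) product measure on Cantor space:
each basic cylinder determined by a string `σ` has measure `2^{-|σ|}`. -/
def IsUniformMeasure (μ : Measure (ℕ → Bool)) : Prop :=
  ∀ σ : List Bool, μ {Z | IsPrefixOf σ Z} = 2⁻¹ ^ σ.length

/-- A uniformly computably enumerable sequence of sets of strings. -/
def UniformlyCE (S : ℕ → Set (List Bool)) : Prop :=
  ∃ f : ℕ → ℕ → Option (List Bool), Computable₂ f ∧
    ∀ m, S m = {σ | ∃ n, f m n = some σ}

/-- A Martin-Löf test with respect to the measure `μ`. -/
def MLTest (μ : Measure (ℕ → Bool)) (S : ℕ → Set (List Bool)) : Prop :=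
  UniformlyCE S ∧ ∀ m, μ (openCl (S m)) ≤ 2⁻¹ ^ m

/-- `Z` is Martin-Löf random w.r.t. `μ`. -/
def MLRandom (μ : Measure (ℕ → Bool)) (Z : ℕ → Bool) : Prop :=
  ∀ S : ℕ → Set (List Bool), MLTest μ S → ∃ m, Z ∉ openCl (S m)

/-- A real is computable if some computable sequence of rationals approximates it
within `2^{-j}`. -/
def ComputableReal (x : ℝ) : Prop :=
  ∃ q : ℕ → ℚ, Computable q ∧ ∀ j : ℕ, |x - (q j : ℝ)| ≤ 2⁻¹ ^ j

/-- A Schnorr test w.r.t. `μ`: a Martin-Löf test whose levels have uniformly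
computable measures. -/
def SchnorrTest (μ : Measure (ℕ → Bool)) (S : ℕ → Set (List Bool)) : Prop :=
  UniformlyCE S ∧ (∀ m, μ (openCl (S m)) ≤ 2⁻¹ ^ m) ∧
    ∃ q : ℕ → ℕ → ℚ, Computable₂ q ∧
      ∀ m j : ℕ, |(μ (openCl (S m))).toReal - (q m j : ℝ)| ≤ 2⁻¹ ^ j

/-- `Z` is Schnorr random w.r.t. `μ`. -/
def SchnorrRandom (μ : Measure (ℕ → Bool)) (Z : ℕ → Bool) : Prop :=
  ∀ S : ℕ → Set (List Bool), SchnorrTest μ S → ∃ m, Z ∉ openCl (S m)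

/-- `Z` is weakly (Kurtz) random w.r.t. `μ`: it belongs to no Π⁰₁ class of measure `0`. -/
def KurtzRandom (μ : Measure (ℕ → Bool)) (Z : ℕ → Bool) : Prop :=
  ∀ P : Set (ℕ → Bool), Pi01Class P → μ P = 0 → Z ∉ P

open scoped ENNReal

namespace MRaux

lemma shift_iter (Z : ℕ → Bool) (m t : ℕ) : shift^[m] Z t = Z (t + m) := by
  induction m generalizing Z with
  | zero => rfl
  | succ m ih =>
    rw [Function.iterate_succ_apply, ih (shift Z)]
    show Z (t + m + 1) = Z (t + (m + 1))
    rw [Nat.add_assoc]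

/-- extend a finite bitstring (as a function) by `false`s. -/
def extF {N : ℕ} (g : Fin N → Bool) : ℕ → Bool := fun v => if h : v < N then g ⟨v, h⟩ else false

def cylF {N : ℕ} (g : Fin N → Bool) : Set (ℕ → Bool) := {Z | ∀ i : Fin N, Z i = g i}

lemma cylF_eq_prefix {N : ℕ} (g : Fin N → Bool) :
    cylF g = {Z | IsPrefixOf (List.ofFn g) Z} := by
  ext Z
  simp only [cylF, Set.mem_setOf_eq, IsPrefixOf, List.length_ofFn]
  constructor
  · intro h i hi
    rw [List.getD_eq_getElem _ _ (by simpa using hi)]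
    simp [List.getElem_ofFn, h ⟨i, hi⟩]
  · intro h i
    have := h i i.isLt
    rw [List.getD_eq_getElem _ _ (by simpa using i.isLt)] at this
    simp_all [List.getElem_ofFn]

lemma measurableSet_cylF {N : ℕ} (g : Fin N → Bool) : MeasurableSet (cylF g) := by
  have : cylF g = ⋂ i : Fin N, (fun Z : ℕ → Bool => Z i) ⁻¹' {g i} := by
    ext Z; simp [cylF, Set.mem_iInter]
  rw [this]
  exact MeasurableSet.iInter fun i => (measurable_pi_apply (i : ℕ)) (measurableSet_singleton _)

lemma measure_cylF {μ : Measure (ℕ → Bool)} (hμ : IsUniformMeasure μ) {N : ℕ}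
    (g : Fin N → Bool) : μ (cylF g) = 2⁻¹ ^ N := by
  rw [cylF_eq_prefix, hμ (List.ofFn g)]; simp

lemma cylF_disjoint {N : ℕ} {g h : Fin N → Bool} (hgh : g ≠ h) :
    Disjoint (cylF g) (cylF h) := by
  rw [Set.disjoint_left]
  intro Z hZg hZh
  exact hgh (funext fun i => (hZg i).symm.trans (hZh i))

/-- A set determined by the first `N` coordinates. -/
def DetBelow (N : ℕ) (A : Set (ℕ → Bool)) : Prop :=
  ∀ Z W : ℕ → Bool, (∀ v, v < N → Z v = W v) → Z ∈ A → W ∈ A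

open Classical in
/-- number of length-`N` strings consistent with `A`. -/
noncomputable def cnt (N : ℕ) (A : Set (ℕ → Bool)) : ℕ :=
  (Finset.univ.filter fun g : Fin N → Bool => extF g ∈ A).card

open Classical in
lemma measure_detBelow {μ : Measure (ℕ → Bool)} (hμ : IsUniformMeasure μ) {N : ℕ}
    {A : Set (ℕ → Bool)} (hA : DetBelow N A) :
    μ A = (cnt N A : ℝ≥0∞) * 2⁻¹ ^ N := by
  have hAeq : A = ⋃ g ∈ (Finset.univ.filter fun g : Fin N → Bool => extF g ∈ A), cylF g := by
    ext Z
    simp only [Set.mem_iUnion, Finset.mem_filter, Finset.mem_univ, true_and]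
    constructor
    · intro hZ
      refine ⟨fun i => Z i, ?_, fun i => rfl⟩
      exact hA Z _ (fun v hv => by simp [extF, hv]) hZ
    · rintro ⟨g, hg, hZg⟩
      refine hA (extF g) Z (fun v hv => by simp [extF, hv, hZg ⟨v, hv⟩]) hg
  conv_lhs => rw [hAeq]
  rw [measure_biUnion_finset ?_ (fun g _ => measurableSet_cylF g)]
  · rw [Finset.sum_congr rfl (fun g _ => measure_cylF hμ g), Finset.sum_const, nsmul_eq_mul]
    rfl
  · intro g _ h _ hgh
    exact cylF_disjoint hgh

def shiftPre (a : ℕ) (B : Set (ℕ → Bool)) : Set (ℕ → Bool) := {Z | (fun v => Z (a + v)) ∈ B}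

lemma detBelow_inter {a b : ℕ} {A B : Set (ℕ → Bool)} (hA : DetBelow a A) (hB : DetBelow b B) :
    DetBelow (a + b) (A ∩ shiftPre a B) := by
  rintro Z W h ⟨hZA, hZB⟩
  exact ⟨hA Z W (fun v hv => h v (by omega)) hZA,
    hB _ _ (fun v hv => h (a + v) (by omega)) hZB⟩

open Classical in
lemma cnt_prod (a b : ℕ) (A B : Set (ℕ → Bool)) (hA : DetBelow a A) (hB : DetBelow b B) :
    cnt (a + b) (A ∩ shiftPre a B) = cnt a A * cnt b B := by
  rw [cnt, cnt, cnt, ← Finset.card_product]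
  refine Finset.card_bij'
    (fun g _ => (fun x : Fin a => g ⟨x, by omega⟩, fun y : Fin b => g ⟨a + y, by omega⟩))
    (fun p _ => fun v : Fin (a + b) =>
      if h : (v : ℕ) < a then p.1 ⟨v, h⟩ else p.2 ⟨(v : ℕ) - a, by omega⟩) ?_ ?_ ?_ ?_
  · rintro g hg
    simp only [Finset.mem_filter, Finset.mem_univ, true_and, Set.mem_inter_iff] at hg ⊢
    rw [Finset.mem_product]
    simp only [Finset.mem_filter, Finset.mem_univ, true_and]
    obtain ⟨hgA, hgB⟩ := hg
    constructor
    · refine hA (extF g) _ (fun v hv => ?_) hgA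
      simp [extF, hv, show v < a + b by omega]
    · refine hB (fun v => extF g (a + v)) _ (fun v hv => ?_) hgB
      simp [extF, show a + v < a + b by omega, hv]
  · rintro p hp
    rw [Finset.mem_product] at hp
    simp only [Finset.mem_filter, Finset.mem_univ, true_and, Set.mem_inter_iff] at hp ⊢
    obtain ⟨hpA, hpB⟩ := hp
    constructor
    · refine hA (extF p.1) _ (fun v hv => ?_) hpA
      simp [extF, hv, show v < a + b by omega]
    · refine hB (extF p.2) _ (fun v hv => ?_) hpB
      simp [extF, hv, show a + v < a + b by omega, show ¬ (a + v < a) by omega,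
        Nat.add_sub_cancel_left]
  · intro g hg
    funext v
    by_cases h : (v : ℕ) < a
    · simp [h]
    · have hv : a + ((v : ℕ) - a) = (v : ℕ) := by omega
      simp [h, hv]
  · intro p hp
    refine Prod.ext (funext fun x => ?_) (funext fun y => ?_)
    · simp [x.isLt]
    · have h1 : ¬ (a + (y : ℕ) < a) := by omega
      simp [h1, Nat.add_sub_cancel_left]

lemma measure_prod {μ : MeasureTheory.Measure (ℕ → Bool)} (hμ : IsUniformMeasure μ)
    {a b : ℕ} {A B : Set (ℕ → Bool)} (hA : DetBelow a A) (hB : DetBelow b B) :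
    μ (A ∩ shiftPre a B) = μ A * μ B := by
  rw [measure_detBelow hμ (detBelow_inter hA hB), cnt_prod a b A B hA hB,
    measure_detBelow hμ hA, measure_detBelow hμ hB, Nat.cast_mul, pow_add]
  ring

open Classical in
lemma card_fix {N : ℕ} (T : Finset (Fin N)) (h : Fin N → Bool) :
    (Finset.univ.filter fun g : Fin N → Bool => ∀ i ∈ T, g i = h i).card
      = 2 ^ (N - T.card) := by
  rw [← Fintype.card_subtype]
  have e : {g : Fin N → Bool // ∀ i ∈ T, g i = h i} ≃ ((Tᶜ : Finset (Fin N)) → Bool) :=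
    { toFun := fun g i => g.1 i
      invFun := fun f => ⟨fun i => if hi : i ∈ T then h i else f ⟨i, by simp [hi]⟩,
        fun i hi => by simp [hi]⟩
      left_inv := fun g => Subtype.ext (funext fun i => by
        by_cases hi : i ∈ T
        · simp [hi, g.2 i hi]
        · simp [hi])
      right_inv := fun f => funext fun i => by
        have hi : (i : Fin N) ∉ T := Finset.mem_compl.mp i.2
        simp [hi] }
  rw [Fintype.card_congr e, Fintype.card_fun]
  simp [Finset.card_compl]

section BadSets
variable (pat : List Bool) (k : ℕ)

def nn (j : ℕ) : ℕ := (pat.length + 1) * (k + 1) ^ (j + 1)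

lemma one_le_nn (j : ℕ) : 1 ≤ nn pat k j := by
  have : 0 < (pat.length + 1) * (k + 1) ^ (j + 1) := by positivity
  unfold nn; omega

lemma len_le_nn (j : ℕ) : pat.length ≤ nn pat k j := by
  have h1 : 1 ≤ (k + 1) ^ (j + 1) := Nat.one_le_pow _ _ (by omega)
  calc pat.length ≤ pat.length + 1 := by omega
    _ = (pat.length + 1) * 1 := by ring
    _ ≤ nn pat k j := Nat.mul_le_mul_left _ h1

lemma step_nn (j : ℕ) : k * nn pat k j + pat.length < nn pat k (j + 1) := by
  have h1 : 1 ≤ (k + 1) ^ (j + 1) := Nat.one_le_pow _ _ (by omega)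
  have h2 : pat.length + 1 ≤ (pat.length + 1) * (k + 1) ^ (j + 1) :=
    Nat.le_mul_of_pos_right _ (by omega)
  have h3 : nn pat k (j + 1) = k * nn pat k j + (pat.length + 1) * (k + 1) ^ (j + 1) := by
    unfold nn; rw [pow_succ]; ring
  omega

lemma nn_le_nn {j m : ℕ} (h : j ≤ m) : nn pat k j ≤ nn pat k m :=
  Nat.mul_le_mul_left _ (Nat.pow_le_pow_right (by omega) (by omega))

lemma coord_lt {j m i r : ℕ} (hj : j < m) (hi : i ≤ k) (hr : r < pat.length) :
    nn pat k j * i + r < nn pat k m := by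
  have h1 := step_nn pat k j
  have h2 := nn_le_nn pat k (show j + 1 ≤ m from hj)
  have h3 : nn pat k j * i ≤ k * nn pat k j := by
    rw [Nat.mul_comm k]; exact Nat.mul_le_mul_left _ hi
  omega

def badAt (q : ℕ) (Z : ℕ → Bool) : Prop :=
  ¬ ∀ i r : ℕ, 1 ≤ i → i ≤ k → r < pat.length → Z (q * i + r) = pat.getD r false

def Bad (m : ℕ) (Z : ℕ → Bool) : Prop := ∀ j, j < m → badAt pat k (nn pat k j) Z

lemma detBelow_Bad (m : ℕ) : DetBelow (nn pat k m) {Z | Bad pat k m Z} := by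
  intro Z W h hZ j hj hcon
  apply hZ j hj
  intro i r h1 hi hr
  rw [h _ (coord_lt pat k hj hi hr)]
  exact hcon i r h1 hi hr

def SucSet (q : ℕ) : Set (ℕ → Bool) :=
  {W | ∀ i r : ℕ, 1 ≤ i → i ≤ k → r < pat.length → W ((i - 1) * q + r) = pat.getD r false}

lemma detBelow_sucCompl (q : ℕ) :
    DetBelow ((k - 1) * q + pat.length) (SucSet pat k q)ᶜ := by
  intro Z W h hZ hcon
  apply hZ
  intro i r h1 hi hr
  have hb : (i - 1) * q + r < (k - 1) * q + pat.length := by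
    have : (i - 1) * q ≤ (k - 1) * q := Nat.mul_le_mul_right _ (by omega)
    omega
  rw [h _ hb]
  exact hcon i r h1 hi hr

lemma coordeq {q i r : ℕ} (h1 : 1 ≤ i) : q + ((i - 1) * q + r) = q * i + r := by
  obtain ⟨s, rfl⟩ : ∃ s, i = s + 1 := ⟨i - 1, by omega⟩
  simp only [Nat.add_sub_cancel]
  ring

lemma bad_step (m : ℕ) :
    {Z | Bad pat k (m + 1) Z}
      = {Z | Bad pat k m Z} ∩ shiftPre (nn pat k m) (SucSet pat k (nn pat k m))ᶜ := by
  ext Z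
  simp only [Set.mem_setOf_eq, Set.mem_inter_iff, shiftPre, Set.mem_compl_iff]
  constructor
  · intro h
    refine ⟨fun j hj => h j (by omega), fun hcon => h m (by omega) ?_⟩
    intro i r h1 hi hr
    rw [← coordeq h1]
    exact hcon i r h1 hi hr
  · rintro ⟨h1, h2⟩ j hj
    rcases Nat.lt_succ_iff_lt_or_eq.mp hj with hj' | rfl
    · exact h1 j hj'
    · intro hcon
      apply h2
      intro i r hi1 hi hr
      show Z (nn pat k j + ((i - 1) * nn pat k j + r)) = pat.getD r false
      rw [coordeq hi1]
      exact hcon i r hi1 hi hr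

open Classical in
lemma cnt_suc (q : ℕ) (hq : pat.length ≤ q) :
    cnt ((k - 1) * q + pat.length) (SucSet pat k q)
      = 2 ^ (((k - 1) * q + pat.length) - k * pat.length) := by
  set b := (k - 1) * q + pat.length with hb
  set ℓ := pat.length with hℓ
  have hbound : ∀ i r : ℕ, 1 ≤ i → i ≤ k → r < ℓ → (i - 1) * q + r < b := by
    intro i r h1 hi hr
    have : (i - 1) * q ≤ (k - 1) * q := Nat.mul_le_mul_right _ (by omega)
    omega
  set T : Finset (Fin b) :=
    ((Finset.Icc 1 k ×ˢ Finset.range ℓ).attach).image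
      (fun p => (⟨(p.1.1 - 1) * q + p.1.2, by
        have hp := p.2
        rw [Finset.mem_product, Finset.mem_Icc, Finset.mem_range] at hp
        exact hbound _ _ hp.1.1 hp.1.2 hp.2⟩ : Fin b)) with hT
  have hmod : ∀ i r : ℕ, 1 ≤ i → r < ℓ → ((i - 1) * q + r) % q = r := by
    intro i r h1 hr
    have hq1 : 0 < q := by omega
    rw [Nat.add_comm, Nat.add_mul_mod_self_right, Nat.mod_eq_of_lt (by omega)]
  have hdiv : ∀ i r : ℕ, 1 ≤ i → r < ℓ → ((i - 1) * q + r) / q = i - 1 := by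
    intro i r h1 hr
    have hq1 : 0 < q := by omega
    rw [Nat.add_comm, Nat.add_mul_div_right _ _ hq1, Nat.div_eq_of_lt (by omega)]
    omega
  have hcardT : T.card = k * ℓ := by
    rw [hT, Finset.card_image_of_injOn, Finset.card_attach, Finset.card_product,
      Nat.card_Icc, Finset.card_range]
    · rw [Nat.add_sub_cancel]
    · intro p1 _ p2 _ hpp
      have hval : (p1.1.1 - 1) * q + p1.1.2 = (p2.1.1 - 1) * q + p2.1.2 := by
        simpa [Fin.mk.injEq] using hpp
      have hp1 := p1.2
      have hp2 := p2.2
      rw [Finset.mem_product, Finset.mem_Icc, Finset.mem_range] at hp1 hp2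
      have e1 : p1.1.2 = p2.1.2 := by
        have := congrArg (· % q) hval
        simpa [hmod _ _ hp1.1.1 hp1.2, hmod _ _ hp2.1.1 hp2.2] using this
      have e2 : p1.1.1 = p2.1.1 := by
        have := congrArg (· / q) hval
        simp only [hdiv _ _ hp1.1.1 hp1.2, hdiv _ _ hp2.1.1 hp2.2] at this
        omega
      exact Subtype.ext (Prod.ext e2 e1)
  have hfilter :
      (Finset.univ.filter fun g : Fin b → Bool => extF g ∈ SucSet pat k q)
        = Finset.univ.filter fun g : Fin b → Bool =>
            ∀ v ∈ T, g v = pat.getD ((v : ℕ) % q) false := by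
    apply Finset.filter_congr
    intro g _
    constructor
    · intro hS v hv
      rw [hT, Finset.mem_image] at hv
      obtain ⟨p, _, rfl⟩ := hv
      have hp := p.2
      rw [Finset.mem_product, Finset.mem_Icc, Finset.mem_range] at hp
      have := hS p.1.1 p.1.2 hp.1.1 hp.1.2 hp.2
      rw [extF] at this
      simp only [hbound _ _ hp.1.1 hp.1.2 hp.2, dif_pos] at this
      simp only [hmod _ _ hp.1.1 hp.2]
      exact this
    · intro hTg i r h1 hi hr
      have hvb := hbound i r h1 hi hr
      have hvT : (⟨(i - 1) * q + r, hvb⟩ : Fin b) ∈ T := by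
        rw [hT, Finset.mem_image]
        refine ⟨⟨(i, r), ?_⟩, Finset.mem_attach _ _, rfl⟩
        rw [Finset.mem_product, Finset.mem_Icc, Finset.mem_range]
        exact ⟨⟨h1, hi⟩, hr⟩
      have := hTg _ hvT
      simp only [hmod _ _ h1 hr] at this
      rw [extF]
      simp only [hvb, dif_pos]
      exact this
  rw [cnt, hfilter, card_fix, hcardT]

open Classical in
lemma cnt_compl (N : ℕ) (A : Set (ℕ → Bool)) : cnt N Aᶜ = 2 ^ N - cnt N A := by
  have h := Finset.card_filter_add_card_filter_not
    (s := (Finset.univ : Finset (Fin N → Bool))) (p := fun g => extF g ∈ A)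
  have hu : (Finset.univ : Finset (Fin N → Bool)).card = 2 ^ N := by
    rw [Finset.card_univ, Fintype.card_fun]
    simp
  have he : cnt N Aᶜ = (Finset.univ.filter fun g : Fin N → Bool => ¬ extF g ∈ A).card := by
    rw [cnt]
    apply Finset.card_bij (fun g _ => g) <;> simp [Set.mem_compl_iff]
  rw [he, cnt]
  omega

lemma ennreal_aux (e b : ℕ) (he : e ≤ b) :
    ((2 ^ b - 2 ^ (b - e) : ℕ) : ENNReal) * 2⁻¹ ^ b = 1 - 2⁻¹ ^ e := by
  have hnat : (2 : ℕ) ^ b - 2 ^ (b - e) = 2 ^ (b - e) * (2 ^ e - 1) := by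
    rw [Nat.mul_sub, Nat.mul_one, ← pow_add]
    congr 2
    omega
  have h2 : (2 : ENNReal) ≠ 0 := by norm_num
  have h2t : (2 : ENNReal) ≠ ⊤ := by norm_num
  have hcancel : ∀ m : ℕ, (2 : ENNReal) ^ m * 2⁻¹ ^ m = 1 := by
    intro m
    rw [← mul_pow, ENNReal.mul_inv_cancel h2 h2t, one_pow]
  rw [hnat]
  push_cast
  have hsplit : (2⁻¹ : ENNReal) ^ b = 2⁻¹ ^ (b - e) * 2⁻¹ ^ e := by
    rw [← pow_add]
    congr 1
    omega
  rw [hsplit]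
  have : (2:ENNReal) ^ (b - e) * ((2:ENNReal) ^ e - 1) * (2⁻¹ ^ (b - e) * 2⁻¹ ^ e)
      = (2 ^ (b - e) * 2⁻¹ ^ (b - e)) * (((2:ENNReal) ^ e - 1) * 2⁻¹ ^ e) := by ring
  rw [this, hcancel, one_mul, ENNReal.sub_mul (fun _ _ => ENNReal.pow_ne_top (ENNReal.inv_ne_top.mpr (by norm_num))), one_mul,
    hcancel]

lemma measure_sucCompl {μ : MeasureTheory.Measure (ℕ → Bool)} (hμ : IsUniformMeasure μ)
    (hk : 1 ≤ k) (q : ℕ) (hq : pat.length ≤ q) :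
    μ (SucSet pat k q)ᶜ = 1 - 2⁻¹ ^ (k * pat.length) := by
  have hkl : k * pat.length ≤ (k - 1) * q + pat.length := by
    obtain ⟨s, rfl⟩ : ∃ s, k = s + 1 := ⟨k - 1, by omega⟩
    simp only [Nat.add_sub_cancel]
    have h1 : s * pat.length ≤ s * q := Nat.mul_le_mul_left _ hq
    have h2 : (s + 1) * pat.length = s * pat.length + pat.length := by ring
    omega
  rw [measure_detBelow hμ (detBelow_sucCompl pat k q), cnt_compl, cnt_suc pat k q hq]
  exact ennreal_aux _ _ hkl

lemma measure_univ_uniform {μ : MeasureTheory.Measure (ℕ → Bool)} (hμ : IsUniformMeasure μ) :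
    μ Set.univ = 1 := by
  have h := hμ []
  simp only [List.length_nil, pow_zero] at h
  have h2 : {Z : ℕ → Bool | IsPrefixOf [] Z} = Set.univ := by
    ext Z
    constructor
    · intro _; trivial
    · intro _ i hi; simp at hi
  rw [h2] at h
  exact h

lemma measure_Bad {μ : MeasureTheory.Measure (ℕ → Bool)} (hμ : IsUniformMeasure μ)
    (hk : 1 ≤ k) (m : ℕ) :
    μ {Z | Bad pat k m Z} ≤ (1 - 2⁻¹ ^ (k * pat.length)) ^ m := by
  induction m with
  | zero =>
    have : {Z : ℕ → Bool | Bad pat k 0 Z} = Set.univ := by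
      ext Z; simp [Bad]
    rw [this, measure_univ_uniform hμ, pow_zero]
  | succ m ih =>
    rw [bad_step, measure_prod hμ (detBelow_Bad pat k m)
      (detBelow_sucCompl pat k (nn pat k m)),
      measure_sucCompl pat k hμ hk _ (len_le_nn pat k m), pow_succ]
    exact mul_le_mul_left ih _

end BadSets

section CEpart

lemma list_any_eq_foldr {α : Type*} (l : List α) (p : α → Bool) :
    l.any p = l.foldr (fun b s => p b || s) false := by
  induction l with
  | nil => rfl
  | cons a l ih => simp [List.any_cons, ih]

lemma list_all_eq_foldr {α : Type*} (l : List α) (p : α → Bool) :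
    l.all p = l.foldr (fun b s => p b && s) true := by
  induction l with
  | nil => rfl
  | cons a l ih => simp [List.all_cons, ih]

lemma primrec_any {α β : Type*} [Primcodable α] [Primcodable β]
    {f : α → List β} {p : α → β → Bool} (hf : Primrec f) (hp : Primrec₂ p) :
    Primrec fun a => (f a).any (p a) := by
  have hh : Primrec₂ (fun (a : α) (bs : β × Bool) => p a bs.1 || bs.2) := by
    have h1 : Primrec (fun x : α × (β × Bool) => cond (p x.1 x.2.1) true x.2.2) :=
      Primrec.cond (hp.comp Primrec.fst (Primrec.fst.comp Primrec.snd))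
        (Primrec.const true) (Primrec.snd.comp Primrec.snd)
    have h2 : Primrec (fun x : α × (β × Bool) => p x.1 x.2.1 || x.2.2) :=
      h1.of_eq fun x => by cases h : p x.1 x.2.1 <;> simp [h]
    exact h2.to₂
  exact (Primrec.list_foldr hf (Primrec.const false) hh).of_eq
    fun a => (list_any_eq_foldr _ _).symm

lemma primrec_all {α β : Type*} [Primcodable α] [Primcodable β]
    {f : α → List β} {p : α → β → Bool} (hf : Primrec f) (hp : Primrec₂ p) :
    Primrec fun a => (f a).all (p a) := by
  have hh : Primrec₂ (fun (a : α) (bs : β × Bool) => p a bs.1 && bs.2) := by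
    have h1 : Primrec (fun x : α × (β × Bool) => cond (p x.1 x.2.1) x.2.2 false) :=
      Primrec.cond (hp.comp Primrec.fst (Primrec.fst.comp Primrec.snd))
        (Primrec.snd.comp Primrec.snd) (Primrec.const false)
    have h2 : Primrec (fun x : α × (β × Bool) => p x.1 x.2.1 && x.2.2) :=
      h1.of_eq fun x => by cases h : p x.1 x.2.1 <;> simp [h]
    exact h2.to₂
  exact (Primrec.list_foldr hf (Primrec.const true) hh).of_eq
    fun a => (list_all_eq_foldr _ _).symm

def matchB (τ s : List Bool) (p : ℕ) : Bool :=
  decide (p + s.length ≤ τ.length) &&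
    ((List.range s.length).all fun t => decide (s.getD t false = τ.getD (p + t) false))

def goodB (l : List (List Bool)) (k : ℕ) (τ : List Bool) : Bool :=
  (List.range (τ.length + 1)).any fun n =>
    decide (1 ≤ n) &&
      ((List.range (k + 1)).all fun i =>
        decide (i = 0) || l.any fun s => matchB τ s (n * i))

lemma primrec_goodB (l : List (List Bool)) (k : ℕ) : Primrec (goodB l k) := by
  -- innermost: matchB z.1.1.1 z.2 (z.1.1.2 * z.1.2)  on z : ((List Bool × ℕ) × ℕ) × List Bool
  have hτ : Primrec (fun z : ((List Bool × ℕ) × ℕ) × List Bool => z.1.1.1) :=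
    Primrec.fst.comp (Primrec.fst.comp Primrec.fst)
  have hs : Primrec (fun z : ((List Bool × ℕ) × ℕ) × List Bool => z.2) := Primrec.snd
  have hpos : Primrec (fun z : ((List Bool × ℕ) × ℕ) × List Bool => z.1.1.2 * z.1.2) :=
    Primrec.nat_mul.comp (Primrec.snd.comp (Primrec.fst.comp Primrec.fst))
      (Primrec.snd.comp Primrec.fst)
  have hc1 : Primrec (fun z : ((List Bool × ℕ) × ℕ) × List Bool =>
      decide (z.1.1.2 * z.1.2 + z.2.length ≤ z.1.1.1.length)) :=
    PrimrecPred.decide (Primrec.nat_le.comp (Primrec.nat_add.comp hpos (Primrec.list_length.comp hs))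
      (Primrec.list_length.comp hτ))
  have hinner : Primrec (fun w : (((List Bool × ℕ) × ℕ) × List Bool) × ℕ =>
      decide (w.1.2.getD w.2 false = w.1.1.1.1.getD (w.1.1.1.2 * w.1.1.2 + w.2) false)) :=
    PrimrecPred.decide (Primrec.eq.comp
      ((Primrec.list_getD false).comp (hs.comp Primrec.fst) Primrec.snd)
      ((Primrec.list_getD false).comp (hτ.comp Primrec.fst)
        (Primrec.nat_add.comp (hpos.comp Primrec.fst) Primrec.snd)))
  have hall1 : Primrec (fun z : ((List Bool × ℕ) × ℕ) × List Bool =>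
      (List.range z.2.length).all fun t =>
        decide (z.2.getD t false = z.1.1.1.getD (z.1.1.2 * z.1.2 + t) false)) :=
    primrec_all (Primrec.list_range.comp (Primrec.list_length.comp hs)) hinner.to₂
  have hmatch : Primrec (fun z : ((List Bool × ℕ) × ℕ) × List Bool =>
      matchB z.1.1.1 z.2 (z.1.1.2 * z.1.2)) := by
    have := Primrec.cond hc1 hall1 (Primrec.const false)
    exact this.of_eq fun z => by
      unfold matchB
      cases h : decide (z.1.1.2 * z.1.2 + z.2.length ≤ z.1.1.1.length) <;> simp [h]
  have hanyl : Primrec (fun y : (List Bool × ℕ) × ℕ =>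
      l.any fun s => matchB y.1.1 s (y.1.2 * y.2)) :=
    primrec_any (Primrec.const l) hmatch.to₂
  have hor : Primrec (fun y : (List Bool × ℕ) × ℕ =>
      (decide (y.2 = 0) || l.any fun s => matchB y.1.1 s (y.1.2 * y.2))) := by
    have := Primrec.cond (PrimrecPred.decide (Primrec.eq.comp Primrec.snd (Primrec.const 0)))
      (Primrec.const true) hanyl
    exact this.of_eq fun y => by cases h : decide (y.2 = 0) <;> simp [h]
  have hall2 : Primrec (fun x : List Bool × ℕ =>
      (List.range (k + 1)).all fun i =>
        decide (i = 0) || l.any fun s => matchB x.1 s (x.2 * i)) :=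
    primrec_all (Primrec.const (List.range (k + 1))) hor.to₂
  have hbody : Primrec (fun x : List Bool × ℕ =>
      (decide (1 ≤ x.2) &&
        ((List.range (k + 1)).all fun i =>
          decide (i = 0) || l.any fun s => matchB x.1 s (x.2 * i)))) := by
    have := Primrec.cond (PrimrecPred.decide (Primrec.nat_le.comp (Primrec.const 1) Primrec.snd))
      hall2 (Primrec.const false)
    exact this.of_eq fun x => by cases h : decide (1 ≤ x.2) <;> simp [h]
  exact primrec_any
    (Primrec.list_range.comp (Primrec.succ.comp Primrec.list_length)) hbody.to₂

lemma goodB_spec (l : List (List Bool)) (k : ℕ) (τ : List Bool) :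
    goodB l k τ = true ↔
      ∃ n, 1 ≤ n ∧ n ≤ τ.length ∧ ∀ i, 1 ≤ i → i ≤ k →
        ∃ s ∈ l, n * i + s.length ≤ τ.length ∧
          ∀ t, t < s.length → s.getD t false = τ.getD (n * i + t) false := by
  simp only [goodB, matchB, List.any_eq_true, List.all_eq_true, List.mem_range,
    Bool.and_eq_true, Bool.or_eq_true, decide_eq_true_eq, Nat.lt_succ_iff]
  constructor
  · rintro ⟨n, hn, h1, hbig⟩
    refine ⟨n, h1, hn, fun i hi1 hik => ?_⟩
    rcases hbig i hik with h0 | ⟨s, hsl, hs1, hs2⟩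
    · omega
    · exact ⟨s, hsl, hs1, fun t ht => hs2 t ht⟩
  · rintro ⟨n, h1, hn, hbig⟩
    refine ⟨n, hn, h1, fun i hik => ?_⟩
    rcases Nat.eq_zero_or_pos i with rfl | hi1
    · exact Or.inl rfl
    · rcases hbig i hi1 hik with ⟨s, hsl, hs1, hs2⟩
      exact Or.inr ⟨s, hsl, hs1, fun t ht => hs2 t ht⟩

lemma ce_goodB (l : List (List Bool)) (k : ℕ) :
    CEStrings {τ | goodB l k τ = true} := by
  refine ⟨fun m => (Encodable.decode (α := List Bool) m).bind
    fun τ => cond (goodB l k τ) (some τ) none, ?_, ?_⟩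
  · apply Primrec.to_comp
    exact Primrec.option_bind Primrec.decode
      ((Primrec.cond ((primrec_goodB l k).comp Primrec.snd)
        (Primrec.option_some.comp Primrec.snd) (Primrec.const none)).to₂)
  · ext τ
    simp only [Set.mem_setOf_eq]
    constructor
    · intro hg
      refine ⟨Encodable.encode τ, ?_⟩
      rw [Encodable.encodek]
      simp [hg]
    · rintro ⟨n, hn⟩
      rcases hd : (Encodable.decode (α := List Bool) n) with _ | τ'
      · rw [hd] at hn; simp at hn
      · rw [hd] at hn
        cases hg : goodB l k τ' <;> simp [hg] at hn
        rw [← hn]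
        exact hg

end CEpart

lemma getD_ofFn {M : ℕ} (f : Fin M → Bool) {j : ℕ} (hj : j < M) :
    (List.ofFn f).getD j false = f ⟨j, hj⟩ := by
  rw [List.getD_eq_getElem _ _ (by simpa using hj)]
  simp [List.getElem_ofFn]

lemma openCl_goodB (F : Finset (List Bool)) (k : ℕ) (hk : 1 ≤ k) :
    openCl {τ | goodB F.toList k τ = true} = {Z | KRecurrentIn k (openCl ↑F) Z} := by
  ext Z
  simp only [openCl, Set.mem_setOf_eq]
  constructor
  · rintro ⟨τ, hτ, hpre⟩
    rw [goodB_spec] at hτ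
    obtain ⟨n, hn1, hnlen, hbig⟩ := hτ
    refine ⟨n, hn1, fun i hi1 hik => ?_⟩
    obtain ⟨s, hsl, hslen, hmatch⟩ := hbig i hi1 hik
    refine ⟨s, Finset.mem_coe.mpr (Finset.mem_toList.mp hsl), fun t ht => ?_⟩
    rw [shift_iter, hmatch t ht, hpre (n * i + t) (by omega)]
    congr 1
    omega
  · rintro ⟨n, hn1, hall⟩
    have hall' : ∀ i, 1 ≤ i → i ≤ k →
        ∃ σ, σ ∈ (↑F : Set (List Bool)) ∧ IsPrefixOf σ (shift^[n * i] Z) := hall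
    choose s hsF hpre using hall'
    set L := F.sup List.length with hL
    set M := n * k + L with hM
    refine ⟨List.ofFn (fun t : Fin M => Z t), ?_, ?_⟩
    · rw [goodB_spec]
      have hlen : (List.ofFn (fun t : Fin M => Z t)).length = M := by
        simp
      refine ⟨n, hn1, ?_, fun i hi1 hik => ?_⟩
      · have : n ≤ n * k := Nat.le_mul_of_pos_right n (by omega)
        omega
      · refine ⟨s i hi1 hik, Finset.mem_toList.mpr (Finset.mem_coe.mp (hsF i hi1 hik)), ?_, ?_⟩
        · have h1 : n * i ≤ n * k := Nat.mul_le_mul_left n hik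
          have h2 : (s i hi1 hik).length ≤ L :=
            Finset.le_sup (f := List.length) (Finset.mem_coe.mp (hsF i hi1 hik))
          omega
        · intro t ht
          have h1 : n * i ≤ n * k := Nat.mul_le_mul_left n hik
          have h2 : (s i hi1 hik).length ≤ L :=
            Finset.le_sup (f := List.length) (Finset.mem_coe.mp (hsF i hi1 hik))
          have hlt : n * i + t < M := by omega
          have hgoal : (List.ofFn fun t : Fin M => Z t).getD (n * i + t) false
              = Z (n * i + t) := getD_ofFn _ hlt
          rw [hgoal, hpre i hi1 hik t ht, shift_iter]
          congr 1
          omega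
    · intro j hj
      rw [List.length_ofFn] at hj
      rw [getD_ofFn _ hj]

end MRaux

open MRaux

/-- Every weakly (Kurtz) random sequence is multiply recurrent in every non-empty
clopen subset of Cantor space. -/
theorem kurtzRandom_multiplyRecurrent_clopen (μ : Measure (ℕ → Bool))
    (hμ : IsUniformMeasure μ) (P : Set (ℕ → Bool))
    (hP : ∃ F : Finset (List Bool), P = openCl ↑F) (hPne : P.Nonempty)
    (Z : ℕ → Bool) (hZ : KurtzRandom μ Z) :
    MultiplyRecurrentIn P Z := by
  obtain ⟨F, rfl⟩ := hP
  intro k hk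
  obtain ⟨Z0, pat, hpatF, hpatZ0⟩ := hPne
  set A := {Z : ℕ → Bool | KRecurrentIn k (openCl ↑F) Z}ᶜ with hA
  have hPi : Pi01Class A :=
    ⟨{τ | goodB F.toList k τ = true}, ce_goodB _ _, by rw [openCl_goodB F k hk]⟩
  have hsub : ∀ m, A ⊆ {Z | Bad pat k m Z} := by
    intro m Y hYA j hj hcon
    apply hYA
    refine ⟨nn pat k j, one_le_nn pat k j, fun i hi1 hik => ?_⟩
    refine ⟨pat, hpatF, fun t ht => ?_⟩
    rw [shift_iter, Nat.add_comm]
    exact (hcon i t hi1 hik ht).symm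
  have hzero : μ A = 0 := by
    have hc : (1 : ENNReal) - 2⁻¹ ^ (k * pat.length) < 1 :=
      ENNReal.sub_lt_self (by norm_num) (by norm_num)
        (pow_ne_zero _ (ENNReal.inv_ne_zero.mpr (by norm_num)))
    have ht := ENNReal.tendsto_pow_atTop_nhds_zero_of_lt_one hc
    have hle : μ A ≤ 0 :=
      ge_of_tendsto' ht fun m =>
        le_trans (measure_mono (hsub m)) (measure_Bad pat k hμ hk m)
    exact le_antisymm hle zero_le
  have hnot := hZ A hPi hzero
  exact Set.not_notMem.mp hnot
end

section
/- If Z ∈ {0,1}^ℕ is Martin-Löf random, then for every Π⁰₁ class P ⊆ {0,1}^ℕ with λ(P) > 0, Z is 1-recurrent in P, i.e., there is n ≥ 1 such that T^n(Z) ∈ P. -/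
open MeasureTheory

section KuceraAux

namespace Kucera

open Nat.Partrec (Code) in
theorem exists_primrec_enum {f : ℕ → Option (List Bool)} (hf : Computable f) :
    ∃ g : ℕ → Option (List Bool), Primrec g ∧
      ∀ σ, (∃ n, g n = some σ) ↔ (∃ n, f n = some σ) := by
  have hp : Nat.Partrec (fun n => Part.some (Encodable.encode (f n))) := by
    have h2 := hf
    unfold Computable Partrec at h2
    exact h2.of_eq fun n => by simp [Encodable.decode]
  obtain ⟨c, hc⟩ := Nat.Partrec.Code.exists_code.1 hp
  classical
  refine ⟨fun p => ((Nat.Partrec.Code.evaln p.unpair.2 c p.unpair.1).bind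
      (fun e => (Encodable.decode (α := Option (List Bool)) e))).bind (fun x => x), ?_, ?_⟩
  · apply Primrec.option_bind
    · apply Primrec.option_bind
      · exact Nat.Partrec.Code.primrec_evaln.comp
          (((Primrec.snd.comp Primrec.unpair).pair (Primrec.const c)).pair
            (Primrec.fst.comp Primrec.unpair))
      · exact (Primrec.decode.comp Primrec.snd).to₂
    · exact Primrec.snd.to₂
  · intro σ
    constructor
    · rintro ⟨p, hp'⟩
      simp only [Option.bind_eq_some_iff] at hp'
      obtain ⟨o, ⟨e, he, hd⟩, hoo⟩ := hp'
      have hmem : e ∈ Nat.Partrec.Code.eval c p.unpair.1 := Nat.Partrec.Code.evaln_sound he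
      rw [hc] at hmem
      simp only [Part.mem_some_iff] at hmem
      subst hmem
      rw [Encodable.encodek] at hd
      cases hd
      exact ⟨p.unpair.1, hoo⟩
    · rintro ⟨n, hn⟩
      have hmem : Encodable.encode (f n) ∈ Nat.Partrec.Code.eval c n := by rw [hc]; simp
      obtain ⟨k, hk⟩ := Nat.Partrec.Code.evaln_complete.1 hmem
      refine ⟨Nat.pair n k, ?_⟩
      rw [Option.mem_def] at hk
      simp [Nat.unpair_pair, hk, Encodable.encodek, hn]


/-- all binary strings of length n -/
def allB : ℕ → List (List Bool) :=
  fun n => Nat.rec [[]] (fun _ IH => IH.map (false :: ·) ++ IH.map (true :: ·)) n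

@[simp] theorem allB_zero : allB 0 = [[]] := rfl
@[simp] theorem allB_succ {n : ℕ} :
    allB (n+1) = (allB n).map (false :: ·) ++ (allB n).map (true :: ·) := rfl

theorem mem_allB {σ : List Bool} {n : ℕ} : σ ∈ allB n ↔ σ.length = n := by
  induction n generalizing σ with
  | zero => simp [List.length_eq_zero_iff]
  | succ n ih =>
    simp only [allB_succ, List.mem_append, List.mem_map]
    constructor
    · rintro (⟨τ, hτ, rfl⟩ | ⟨τ, hτ, rfl⟩) <;> simp [ih.1 hτ]
    · intro h
      cases σ with
      | nil => simp at h
      | cons b τ =>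
        have : τ.length = n := by simpa using h
        cases b
        · exact Or.inl ⟨τ, ih.2 this, rfl⟩
        · exact Or.inr ⟨τ, ih.2 this, rfl⟩

theorem nodup_allB (n : ℕ) : (allB n).Nodup := by
  induction n with
  | zero => simp
  | succ n ih =>
    rw [allB_succ]
    refine List.Nodup.append (ih.map ?_) (ih.map ?_) ?_
    · intro a b h; simpa using h
    · intro a b h; simpa using h
    · intro x hx hy
      simp only [List.mem_map] at hx hy
      obtain ⟨a, _, rfl⟩ := hx
      obtain ⟨b, _, h⟩ := hy
      simp at h

/-- truncation of a list with default padding -/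
def take' (τ : List Bool) (k : ℕ) : List Bool := (List.range k).map (fun i => τ.getD i false)

theorem take'_eq_take {τ : List Bool} {k : ℕ} (h : k ≤ τ.length) : take' τ k = τ.take k := by
  apply List.ext_getElem
  · simp [take', h]
  · intro i h1 h2
    have hik : i < k := by simpa [take'] using h1
    have hit : i < τ.length := by simp at h2; omega
    simp [take', List.getD_eq_getElem?_getD, List.getElem?_eq_getElem, hik, hit,
      List.getElem_take]

/-- Boolean prefix test -/
def pisPrefix (υ τ : List Bool) : Bool :=
  decide (υ.length ≤ τ.length) && decide (υ = take' τ υ.length)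

theorem pisPrefix_iff {υ τ : List Bool} : pisPrefix υ τ = true ↔ υ <+: τ := by
  constructor
  · intro h
    simp only [pisPrefix, Bool.and_eq_true, decide_eq_true_eq] at h
    obtain ⟨h1, h2⟩ := h
    rw [take'_eq_take h1] at h2
    rw [h2]
    exact List.take_prefix _ _
  · intro h
    have h1 : υ.length ≤ τ.length := h.length_le
    have h2 : υ = τ.take υ.length := (List.prefix_iff_eq_take.1 h)
    simp [pisPrefix, h1, take'_eq_take h1, ← h2]

theorem prefix_of_le_of_getD {σ τ : List Bool} (h : σ.length ≤ τ.length)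
    (he : ∀ i < σ.length, σ.getD i false = τ.getD i false) : σ <+: τ := by
  induction σ generalizing τ with
  | nil => exact List.nil_prefix
  | cons a σ' ih =>
    cases τ with
    | nil => simp at h
    | cons b τ' =>
      have h0 : a = b := by simpa using he 0 (by simp)
      subst h0
      refine List.cons_prefix_cons.2 ⟨rfl, ih (by simpa using h) ?_⟩
      intro i hi
      simpa using he (i+1) (by simpa using Nat.succ_lt_succ hi)

theorem disjoint_cyl_of_incomp {σ τ : List Bool} (h1 : ¬ σ <+: τ) (h2 : ¬ τ <+: σ) :
    ∀ Z : ℕ → Bool, IsPrefixOf σ Z → IsPrefixOf τ Z → False := by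
  intro Z hσ hτ
  rcases le_total σ.length τ.length with h | h
  · exact h1 (prefix_of_le_of_getD h fun i hi => by
      rw [hσ i hi, hτ i (lt_of_lt_of_le hi h)])
  · exact h2 (prefix_of_le_of_getD h fun i hi => by
      rw [hτ i hi, hσ i (lt_of_lt_of_le hi h)])

theorem isPrefixOf_of_prefix {σ τ : List Bool} {Z : ℕ → Bool} (h : σ <+: τ)
    (hτ : IsPrefixOf τ Z) : IsPrefixOf σ Z := by
  intro i hi
  have hlt : i < τ.length := lt_of_lt_of_le hi h.length_le
  rw [← hτ i hlt]
  obtain ⟨t, rfl⟩ := h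
  simp [List.getD_eq_getElem?_getD, List.getElem?_append_left hi]

/-- prefix of Z of length n as a list -/
def Zt (n : ℕ) (Z : ℕ → Bool) : List Bool := (List.range n).map Z

@[simp] theorem Zt_length {n Z} : (Zt n Z).length = n := by simp [Zt]

theorem isPrefixOf_Zt {n : ℕ} {Z : ℕ → Bool} : IsPrefixOf (Zt n Z) Z := by
  intro i hi
  simp only [Zt_length] at hi
  simp [Zt, List.getD_eq_getElem?_getD, List.getElem?_map, List.getElem?_range hi]

theorem prefix_Zt_of_isPrefixOf {σ : List Bool} {Z : ℕ → Bool} {n : ℕ}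
    (h : IsPrefixOf σ Z) (hn : σ.length ≤ n) : σ <+: Zt n Z := by
  refine prefix_of_le_of_getD (by simpa using hn) ?_
  intro i hi
  rw [h i hi]
  have := isPrefixOf_Zt (n := n) (Z := Z) i (by simp; omega)
  rw [this]


def hasPref (acc : List (List Bool)) (τ : List Bool) : Bool :=
  acc.foldr (fun υ b => pisPrefix υ τ || b) false

theorem hasPref_iff {acc τ} : hasPref acc τ = true ↔ ∃ υ ∈ acc, υ <+: τ := by
  induction acc with
  | nil => simp [hasPref]
  | cons a l ih =>
    simp only [hasPref, List.foldr_cons, Bool.or_eq_true, List.mem_cons]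
    rw [pisPrefix_iff]
    constructor
    · rintro (h | h)
      · exact ⟨a, Or.inl rfl, h⟩
      · obtain ⟨υ, hυ, hp⟩ := ih.1 h
        exact ⟨υ, Or.inr hυ, hp⟩
    · rintro ⟨υ, (rfl | hυ), hp⟩
      · exact Or.inl hp
      · exact Or.inr (ih.2 ⟨υ, hυ, hp⟩)

def emit (o : Option (List Bool)) (n : ℕ) (acc : List (List Bool)) : List (List Bool) :=
  match o with
  | none => []
  | some σ =>
    if σ.length ≤ n then
      ((allB (n - σ.length)).map (σ ++ ·)).filter (fun τ => ! hasPref acc τ)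
    else []

variable (ff : ℕ → Option (List Bool))

def accF : ℕ → List (List Bool) :=
  fun n => Nat.rec [] (fun m IH => IH ++ emit (ff m.unpair.1) m IH) n

@[simp] theorem accF_zero : accF ff 0 = [] := rfl
@[simp] theorem accF_succ {n : ℕ} :
    accF ff (n+1) = accF ff n ++ emit (ff n.unpair.1) n (accF ff n) := rfl

def stageL (n : ℕ) : List (List Bool) := emit (ff n.unpair.1) n (accF ff n)

def FF (p : ℕ) : Option (List Bool) := (stageL ff p.unpair.1)[p.unpair.2]?

theorem length_of_mem_emit {o n acc τ} (h : τ ∈ emit o n acc) : τ.length = n := by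
  match o with
  | none => simp [emit] at h
  | some σ =>
    simp only [emit] at h
    split at h
    · next hle =>
      obtain ⟨hm, _⟩ := List.mem_filter.1 h
      obtain ⟨ρ, hρ, rfl⟩ := List.mem_map.1 hm
      have := mem_allB.1 hρ
      simp [this]; omega
    · simp at h

theorem prefix_of_mem_emit {o n acc τ} (h : τ ∈ emit o n acc) :
    ∃ σ, o = some σ ∧ σ <+: τ := by
  match o with
  | none => simp [emit] at h
  | some σ =>
    refine ⟨σ, rfl, ?_⟩
    simp only [emit] at h
    split at h
    · obtain ⟨hm, _⟩ := List.mem_filter.1 h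
      obtain ⟨ρ, hρ, rfl⟩ := List.mem_map.1 hm
      exact List.prefix_append σ ρ
    · simp at h

theorem no_pref_of_mem_emit {o n acc τ} (h : τ ∈ emit o n acc) :
    ∀ υ ∈ acc, ¬ υ <+: τ := by
  intro υ hυ hpre
  match o with
  | none => simp [emit] at h
  | some σ =>
    simp only [emit] at h
    split at h
    · obtain ⟨_, hf⟩ := List.mem_filter.1 h
      simp only [Bool.not_eq_true'] at hf
      rw [← Bool.not_eq_true] at hf
      exact hf (hasPref_iff.2 ⟨υ, hυ, hpre⟩)
    · simp at h

theorem nodup_emit (o n acc) : (emit o n acc).Nodup := by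
  match o with
  | none => simp [emit]
  | some σ =>
    simp only [emit]
    split
    · exact (((nodup_allB _).map (fun a b h => by simpa using h)).filter _)
    · simp

theorem mem_accF {τ n} : τ ∈ accF ff n ↔ ∃ m < n, τ ∈ stageL ff m := by
  induction n with
  | zero => simp
  | succ n ih =>
    simp only [accF_succ, List.mem_append, ih]
    constructor
    · rintro (⟨m, hm, h⟩ | h)
      · exact ⟨m, Nat.lt_succ_of_lt hm, h⟩
      · exact ⟨n, Nat.lt_succ_self n, h⟩
    · rintro ⟨m, hm, h⟩
      rcases Nat.lt_succ_iff_lt_or_eq.1 hm with hm' | rfl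
      · exact Or.inl ⟨m, hm', h⟩
      · exact Or.inr h

theorem length_of_mem_stageL {τ n} (h : τ ∈ stageL ff n) : τ.length = n :=
  length_of_mem_emit h

/-- coverage: if `Z` extends some enumerated string, it extends an emitted string. -/
theorem cover {m : ℕ} {σ : List Bool} {Z : ℕ → Bool} (hm : ff m = some σ)
    (hZ : IsPrefixOf σ Z) : ∃ n τ, τ ∈ stageL ff n ∧ IsPrefixOf τ Z := by
  set n := Nat.pair m σ.length with hn
  have hu1 : n.unpair.1 = m := by simp [hn]
  have hu2 : σ.length ≤ n := Nat.right_le_pair m σ.length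
  set τ0 := Zt n Z with hτ0
  by_cases hp : hasPref (accF ff n) τ0 = true
  · obtain ⟨υ, hυ, hpre⟩ := hasPref_iff.1 hp
    obtain ⟨m', _, hst⟩ := (mem_accF ff).1 hυ
    exact ⟨m', υ, hst, isPrefixOf_of_prefix hpre isPrefixOf_Zt⟩
  · refine ⟨n, τ0, ?_, isPrefixOf_Zt⟩
    have hpre : σ <+: τ0 := prefix_Zt_of_isPrefixOf hZ hu2
    obtain ⟨t, ht⟩ := hpre
    have hlt : t.length = n - σ.length := by
      have : σ.length + t.length = n := by
        have h2 := congrArg List.length ht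
        simpa [hτ0] using h2
      omega
    simp only [stageL, hu1, hm, emit, if_pos hu2]
    refine List.mem_filter.2 ⟨List.mem_map.2 ⟨t, mem_allB.2 hlt, ht⟩, by simp [hp]⟩

/-- FF values are pairwise prefix-incomparable (in particular distinct). -/
theorem FF_incomp {p q : ℕ} (hne : p ≠ q) {σ τ : List Bool}
    (hp : FF ff p = some σ) (hq : FF ff q = some τ) : ¬ σ <+: τ := by
  intro hpre
  unfold FF at hp hq
  have hσs : σ ∈ stageL ff p.unpair.1 := List.mem_of_getElem? hp
  have hτs : τ ∈ stageL ff q.unpair.1 := List.mem_of_getElem? hq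
  have hlσ : σ.length = p.unpair.1 := length_of_mem_stageL ff hσs
  have hlτ : τ.length = q.unpair.1 := length_of_mem_stageL ff hτs
  rcases lt_trichotomy p.unpair.1 q.unpair.1 with h | h | h
  · -- σ is in accF at stage q.unpair.1, but τ survived the filter
    have hacc : σ ∈ accF ff q.unpair.1 := (mem_accF ff).2 ⟨p.unpair.1, h, hσs⟩
    exact no_pref_of_mem_emit hτs σ hacc hpre
  · -- same stage: same length, so prefix forces equality; nodup forces same index
    have heq : σ = τ := List.IsPrefix.eq_of_length hpre (by omega)
    subst heq
    rw [h] at hp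
    have hnd : (stageL ff q.unpair.1).Nodup := nodup_emit _ _ _
    have : p.unpair.2 = q.unpair.2 := by
      have h1 := List.getElem?_eq_some_iff.1 hp
      have h2 := List.getElem?_eq_some_iff.1 hq
      obtain ⟨l1, e1⟩ := h1
      obtain ⟨l2, e2⟩ := h2
      exact hnd.getElem_inj_iff.1 (e1.trans e2.symm)
    apply hne
    have e1 := Nat.pair_unpair p
    have e2 := Nat.pair_unpair q
    rw [← e1, ← e2, h, this]
  · have : τ.length < σ.length := by omega
    have := hpre.length_le
    omega


theorem openCl_FF_eq :
    openCl {σ | ∃ p, FF ff p = some σ} = openCl {σ | ∃ n, ff n = some σ} := by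
  ext Z
  constructor
  · rintro ⟨σ, ⟨p, hp⟩, hpre⟩
    have hσs : σ ∈ stageL ff p.unpair.1 := List.mem_of_getElem? hp
    obtain ⟨σ0, hσ0, hpre0⟩ := prefix_of_mem_emit hσs
    exact ⟨σ0, ⟨_, hσ0⟩, isPrefixOf_of_prefix hpre0 hpre⟩
  · rintro ⟨σ, ⟨m, hm⟩, hpre⟩
    obtain ⟨n, τ, hst, hτ⟩ := cover ff hm hpre
    obtain ⟨i, hi⟩ := List.getElem?_of_mem hst
    exact ⟨τ, ⟨Nat.pair n i, by simp [FF, Nat.unpair_pair, hi]⟩, hτ⟩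

def DD (p : ℕ) : Option (List Bool) :=
  if p.unpair.1 < 2 then (FF ff p.unpair.2).map (fun σ => p.unpair.1.bodd :: σ) else none

theorem DD_some_iff {p x} : DD ff p = some x ↔
    p.unpair.1 < 2 ∧ ∃ σ, FF ff p.unpair.2 = some σ ∧ x = p.unpair.1.bodd :: σ := by
  unfold DD
  split
  · next h =>
    simp only [Option.map_eq_some_iff]
    constructor
    · rintro ⟨σ, h1, rfl⟩; exact ⟨h, σ, h1, rfl⟩
    · rintro ⟨-, σ, h1, rfl⟩; exact ⟨σ, h1, rfl⟩
  · next h => simp [h]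

theorem mem_setDD {b : Bool} {σ : List Bool} :
    (∃ p, DD ff p = some (b :: σ)) ↔ ∃ q, FF ff q = some σ := by
  constructor
  · rintro ⟨p, hp⟩
    obtain ⟨-, σ', h1, h2⟩ := (DD_some_iff ff).1 hp
    cases h2
    exact ⟨_, h1⟩
  · rintro ⟨q, hq⟩
    refine ⟨Nat.pair (cond b 1 0) q, (DD_some_iff ff).2 ⟨?_, σ, ?_, ?_⟩⟩
    · cases b <;> simp [Nat.unpair_pair]
    · simp [Nat.unpair_pair, hq]
    · cases b <;> simp [Nat.unpair_pair]

theorem DD_shape {p x} (h : DD ff p = some x) : ∃ b σ, x = b :: σ ∧ ∃ q, FF ff q = some σ := by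
  obtain ⟨-, σ, h1, rfl⟩ := (DD_some_iff ff).1 h
  exact ⟨_, σ, rfl, _, h1⟩

def omapM : List ℕ → Option (List (List Bool)) :=
  fun l => l.foldr (fun a r => (DD ff a).bind fun x => r.map (x :: ·)) (some [])

@[simp] theorem omapM_nil : omapM ff [] = some [] := rfl
@[simp] theorem omapM_cons {a l} :
    omapM ff (a :: l) = (DD ff a).bind fun x => (omapM ff l).map (x :: ·) := rfl

theorem omapM_eq_some {l : List ℕ} {L : List (List Bool)} :
    omapM ff l = some L ↔ List.Forall₂ (fun a x => DD ff a = some x) l L := by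
  induction l generalizing L with
  | nil =>
    cases L <;> simp
  | cons a l ih =>
    cases L with
    | nil =>
      simp only [omapM_cons, List.forall₂_cons_left_iff]
      constructor
      · intro h
        rcases h1 : DD ff a with _ | x
        · rw [h1] at h; simp at h
        · rw [h1] at h
          rcases h2 : omapM ff l with _ | L'
          · rw [h2] at h; simp at h
          · rw [h2] at h; simp at h
      · simp
    | cons x L' =>
      simp only [omapM_cons, List.forall₂_cons]
      constructor
      · intro h
        rcases h1 : DD ff a with _ | y
        · rw [h1] at h; simp at h
        · rw [h1] at h
          rcases h2 : omapM ff l with _ | L''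
          · rw [h2] at h; simp at h
          · rw [h2] at h
            have h' : y :: L'' = x :: L' := by simpa using h
            injection h' with e1 e2
            subst e1; subst e2
            exact ⟨rfl, ih.1 h2⟩
      · rintro ⟨h1, h2⟩
        rw [h1, ih.2 h2]
        rfl

theorem forall2_exists_left {R : ℕ → List Bool → Prop} {l L} (h : List.Forall₂ R l L)
    {x} (hx : x ∈ L) : ∃ a ∈ l, R a x := by
  induction h with
  | nil => simp at hx
  | cons hr _ ih =>
    rcases List.mem_cons.1 hx with rfl | hx'
    · exact ⟨_, List.mem_cons_self, hr⟩
    · obtain ⟨a, ha, hra⟩ := ih hx'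
      exact ⟨a, List.mem_cons_of_mem _ ha, hra⟩

def GG (k n : ℕ) : Option (List Bool) :=
  if (Denumerable.ofNat (List ℕ) n).length = k + 1 then
    (omapM ff (Denumerable.ofNat (List ℕ) n)).map List.flatten
  else none

theorem exists_GG_iff {k : ℕ} {σ : List Bool} :
    (∃ n, GG ff k n = some σ) ↔
      ∃ L : List (List Bool), L.length = k + 1 ∧ (∀ x ∈ L, ∃ p, DD ff p = some x) ∧
        σ = L.flatten := by
  constructor
  · rintro ⟨n, hn⟩
    unfold GG at hn
    split at hn
    · next hlen =>
      obtain ⟨L, hL, rfl⟩ := Option.map_eq_some_iff.1 hn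
      have hfa := (omapM_eq_some ff).1 hL
      refine ⟨L, ?_, ?_, rfl⟩
      · rw [← hfa.length_eq]; exact hlen
      · intro x hx
        obtain ⟨a, -, ha⟩ := forall2_exists_left hfa hx
        exact ⟨a, ha⟩
    · simp at hn
  · rintro ⟨L, hlen, hmem, rfl⟩
    -- build a list of codes
    have : ∃ l : List ℕ, List.Forall₂ (fun a x => DD ff a = some x) l L := by
      clear hlen
      induction L with
      | nil => exact ⟨[], List.Forall₂.nil⟩
      | cons x L' ih =>
        obtain ⟨l', hl'⟩ := ih (fun y hy => hmem y (List.mem_cons_of_mem _ hy))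
        obtain ⟨a, ha⟩ := hmem x (List.mem_cons_self)
        exact ⟨a :: l', List.Forall₂.cons ha hl'⟩
    obtain ⟨l, hl⟩ := this
    refine ⟨Encodable.encode l, ?_⟩
    unfold GG
    rw [Denumerable.ofNat_encode]
    rw [if_pos (by rw [hl.length_eq]; exact hlen)]
    rw [(omapM_eq_some ff).2 hl]
    rfl



/-! ### Primitive recursiveness of the constructions -/

section PrimrecSection

theorem allB_primrec : Primrec allB := by
  have hstep : Primrec₂ (fun (_ : ℕ) (IH : List (List Bool)) =>
      IH.map (false :: ·) ++ IH.map (true :: ·)) := by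
    have H : Primrec (fun p : ℕ × List (List Bool) =>
        p.2.map (false :: ·) ++ p.2.map (true :: ·)) := Primrec.list_append.comp
      (Primrec.list_map Primrec.snd
        ((Primrec.list_cons.comp (Primrec.const false) Primrec.snd).to₂))
      (Primrec.list_map Primrec.snd
        ((Primrec.list_cons.comp (Primrec.const true) Primrec.snd).to₂))
    exact H.to₂
  exact Primrec.nat_rec₁ [[]] hstep

theorem take'_primrec : Primrec₂ take' := by
  have H : Primrec (fun p : List Bool × ℕ =>
      (List.range p.2).map (fun i => p.1.getD i false)) := Primrec.list_map (Primrec.list_range.comp Primrec.snd)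
    (((Primrec.list_getD false).comp (Primrec.fst.comp Primrec.fst) Primrec.snd).to₂)
  exact H.to₂

theorem pisPrefix_primrec : Primrec₂ pisPrefix := by
  have c1 : PrimrecPred (fun p : List Bool × List Bool => p.1.length ≤ p.2.length) :=
    Primrec.nat_le.comp (Primrec.list_length.comp Primrec.fst)
      (Primrec.list_length.comp Primrec.snd)
  have c2 : PrimrecPred (fun p : List Bool × List Bool => p.1 = take' p.2 p.1.length) :=
    Primrec.eq.comp Primrec.fst
      (take'_primrec.comp Primrec.snd (Primrec.list_length.comp Primrec.fst))
  exact ((Primrec.dom_bool₂ (· && ·)).comp c1.decide c2.decide).to₂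

theorem hasPref_primrec : Primrec₂ hasPref := by
  have := Primrec.list_foldr (α := List (List Bool) × List Bool)
    (f := fun p => p.1) (g := fun _ => false)
    (h := fun p q => pisPrefix q.1 p.2 || q.2)
    Primrec.fst (Primrec.const false)
    (Primrec.to₂ ((Primrec.dom_bool₂ (· || ·)).comp
      (pisPrefix_primrec.comp (Primrec.fst.comp Primrec.snd) (Primrec.snd.comp Primrec.fst))
      (Primrec.snd.comp Primrec.snd)))
  exact this.to₂

theorem filter_eq_flatMap (l : List (List Bool)) (p : List Bool → Bool) :
    l.filter p = l.flatMap (fun a => bif p a then [a] else ([] : List (List Bool))) := by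
  induction l with
  | nil => rfl
  | cons a l ih =>
    rw [List.filter_cons, List.flatMap_cons, ← ih]
    cases h : p a <;> simp [h]

set_option maxHeartbeats 1000000 in
theorem emit_primrec :
    Primrec (fun t : (Option (List Bool) × ℕ) × List (List Bool) => emit t.1.1 t.1.2 t.2) := by
  have hg : Primrec₂ (fun (t : (Option (List Bool) × ℕ) × List (List Bool)) (σ : List Bool) =>
      if σ.length ≤ t.1.2 then
        ((allB (t.1.2 - σ.length)).map (σ ++ ·)).filter (fun τ => ! hasPref t.2 τ)
      else ([] : List (List Bool))) := by
    have H : Primrec (fun q : ((Option (List Bool) × ℕ) × List (List Bool)) × List Bool =>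
        if q.2.length ≤ q.1.1.2 then
          ((allB (q.1.1.2 - q.2.length)).map (q.2 ++ ·)).filter (fun τ => ! hasPref q.1.2 τ)
        else ([] : List (List Bool))) := by
      refine Primrec.ite ?_ ?_ (Primrec.const [])
      · exact Primrec.nat_le.comp (Primrec.list_length.comp Primrec.snd)
          (Primrec.snd.comp (Primrec.fst.comp Primrec.fst))
      · have hmap : Primrec
            (fun q : ((Option (List Bool) × ℕ) × List (List Bool)) × List Bool =>
              (allB (q.1.1.2 - q.2.length)).map (q.2 ++ ·)) :=
          Primrec.list_map
            (allB_primrec.comp (Primrec.nat_sub.comp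
              (Primrec.snd.comp (Primrec.fst.comp Primrec.fst))
              (Primrec.list_length.comp Primrec.snd)))
            ((Primrec.list_append.comp (Primrec.snd.comp Primrec.fst) Primrec.snd).to₂)
        have hfil : Primrec₂
            (fun (q : ((Option (List Bool) × ℕ) × List (List Bool)) × List Bool)
              (τ : List Bool) => bif ! hasPref q.1.2 τ then [τ] else ([] : List (List Bool))) := by
          have H2 : Primrec
              (fun r : (((Option (List Bool) × ℕ) × List (List Bool)) × List Bool) × List Bool =>
                bif ! hasPref r.1.1.2 r.2 then [r.2] else ([] : List (List Bool))) := by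
            refine Primrec.cond ?_ ?_ (Primrec.const [])
            · exact (Primrec.dom_bool Bool.not).comp
                (hasPref_primrec.comp (Primrec.snd.comp (Primrec.fst.comp Primrec.fst))
                  Primrec.snd)
            · exact Primrec.list_cons.comp Primrec.snd (Primrec.const [])
          exact H2.to₂
        exact (Primrec.list_flatMap hmap hfil).of_eq fun q => (filter_eq_flatMap _ _).symm
    exact H.to₂
  have := Primrec.option_casesOn (Primrec.fst.comp Primrec.fst) (Primrec.const []) hg
  exact this.of_eq fun t => by rcases t with ⟨⟨o, n⟩, acc⟩; cases o <;> rfl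

theorem accF_primrec (hff : Primrec ff) : Primrec (accF ff) := by
  have hh : Primrec₂ (fun (_ : ℕ) (q : ℕ × List (List Bool)) =>
      q.2 ++ emit (ff q.1.unpair.1) q.1 q.2) := by
    have H : Primrec (fun p : ℕ × (ℕ × List (List Bool)) =>
        p.2.2 ++ emit (ff p.2.1.unpair.1) p.2.1 p.2.2) := by
      refine Primrec.list_append.comp (Primrec.snd.comp Primrec.snd) ?_
      exact emit_primrec.comp
        ((((hff.comp (Primrec.fst.comp (Primrec.unpair.comp
          (Primrec.fst.comp Primrec.snd)))).pair (Primrec.fst.comp Primrec.snd)).pair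
          (Primrec.snd.comp Primrec.snd)))
    exact H.to₂
  exact (Primrec.nat_rec' Primrec.id (Primrec.const []) hh).of_eq fun n => rfl

theorem stageL_primrec (hff : Primrec ff) : Primrec (stageL ff) :=
  (emit_primrec.comp (((hff.comp (Primrec.fst.comp Primrec.unpair)).pair
    Primrec.id).pair (accF_primrec ff hff))).of_eq fun n => rfl

theorem FF_primrec (hff : Primrec ff) : Primrec (FF ff) :=
  Primrec.list_getElem?.comp
    ((stageL_primrec ff hff).comp (Primrec.fst.comp Primrec.unpair))
    (Primrec.snd.comp Primrec.unpair)

theorem DD_primrec (hff : Primrec ff) : Primrec (DD ff) := by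
  refine Primrec.ite ?_ ?_ (Primrec.const none)
  · exact Primrec.nat_lt.comp (Primrec.fst.comp Primrec.unpair) (Primrec.const 2)
  · exact Primrec.option_map
      ((FF_primrec ff hff).comp (Primrec.snd.comp Primrec.unpair))
      ((Primrec.list_cons.comp
        (Primrec.nat_bodd.comp (Primrec.fst.comp (Primrec.unpair.comp Primrec.fst)))
        Primrec.snd).to₂)

theorem omapM_primrec (hff : Primrec ff) : Primrec (omapM ff) := by
  have hh : Primrec₂ (fun (_ : List ℕ) (q : ℕ × Option (List (List Bool))) =>
      (DD ff q.1).bind fun x => q.2.map (x :: ·)) := by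
    have H : Primrec (fun p : List ℕ × (ℕ × Option (List (List Bool))) =>
        (DD ff p.2.1).bind fun x => p.2.2.map (x :: ·)) := by
      refine Primrec.option_bind ((DD_primrec ff hff).comp (Primrec.fst.comp Primrec.snd)) ?_
      have H2 : Primrec (fun r : (List ℕ × (ℕ × Option (List (List Bool)))) × List Bool =>
          r.1.2.2.map (r.2 :: ·)) :=
        Primrec.option_map ((Primrec.snd.comp Primrec.snd).comp Primrec.fst)
          ((Primrec.list_cons.comp (Primrec.snd.comp Primrec.fst) Primrec.snd).to₂)
      exact H2.to₂
    exact H.to₂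
  exact (Primrec.list_foldr Primrec.id (Primrec.const (some [])) hh).of_eq fun l => rfl

theorem GG_primrec (hff : Primrec ff) : Primrec₂ (GG ff) := by
  have hofnat : Primrec (fun p : ℕ × ℕ => Denumerable.ofNat (List ℕ) p.2) :=
    (Primrec.ofNat (List ℕ)).comp Primrec.snd
  have H : Primrec (fun p : ℕ × ℕ =>
      if (Denumerable.ofNat (List ℕ) p.2).length = p.1 + 1 then
        (omapM ff (Denumerable.ofNat (List ℕ) p.2)).map List.flatten
      else none) := by
    refine Primrec.ite ?_ ?_ (Primrec.const none)
    · exact Primrec.eq.comp (Primrec.list_length.comp hofnat) (Primrec.succ.comp Primrec.fst)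
    · exact Primrec.option_map ((omapM_primrec ff hff).comp hofnat)
        ((Primrec.list_flatten.comp Primrec.snd).to₂)
  exact H.to₂

end PrimrecSection


/-! ### Measure theory -/

section MeasureSection
open MeasureTheory
open scoped ENNReal

def cyl (σ : List Bool) : Set (ℕ → Bool) := {Z | IsPrefixOf σ Z}

def ocyl : Option (List Bool) → Set (ℕ → Bool)
  | none => ∅
  | some σ => cyl σ

noncomputable def wfn : Option (List Bool) → ℝ≥0∞
  | none => 0
  | some σ => 2⁻¹ ^ σ.length

theorem measurableSet_cyl (σ : List Bool) : MeasurableSet (cyl σ) := by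
  have : cyl σ = ⋂ i : ℕ, if i < σ.length then (fun Z : ℕ → Bool => Z i) ⁻¹' {σ.getD i false}
      else Set.univ := by
    ext Z
    simp only [cyl, Set.mem_setOf_eq, IsPrefixOf, Set.mem_iInter]
    constructor
    · intro h i
      split
      · next hi => simp [Set.mem_preimage, (h i hi).symm]
      · trivial
    · intro h i hi
      have := h i
      rw [if_pos hi] at this
      simpa [eq_comm] using this
  rw [this]
  exact MeasurableSet.iInter fun i => by
    split
    · exact (measurable_pi_apply i) (measurableSet_singleton _)
    · exact MeasurableSet.univ

theorem measurableSet_ocyl (o : Option (List Bool)) : MeasurableSet (ocyl o) := by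
  cases o
  · exact MeasurableSet.empty
  · exact measurableSet_cyl _

variable {μ : Measure (ℕ → Bool)}

theorem measure_ocyl (hμ : IsUniformMeasure μ) (o : Option (List Bool)) :
    μ (ocyl o) = wfn o := by
  cases o
  · simp [ocyl, wfn]
  · exact hμ _

theorem openCl_eq_iUnion (f : ℕ → Option (List Bool)) :
    openCl {σ | ∃ n, f n = some σ} = ⋃ n, ocyl (f n) := by
  ext Z
  simp only [openCl, Set.mem_setOf_eq, Set.mem_iUnion]
  constructor
  · rintro ⟨σ, ⟨n, hn⟩, hpre⟩
    exact ⟨n, by rw [hn]; exact hpre⟩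
  · rintro ⟨n, hZ⟩
    rcases h : f n with _ | σ
    · rw [h] at hZ; simp [ocyl] at hZ
    · rw [h] at hZ
      exact ⟨σ, ⟨n, h⟩, hZ⟩

theorem measurableSet_openCl_enum (f : ℕ → Option (List Bool)) :
    MeasurableSet (openCl {σ | ∃ n, f n = some σ}) := by
  rw [openCl_eq_iUnion]
  exact MeasurableSet.iUnion fun n => measurableSet_ocyl _

theorem measure_openCl_le (hμ : IsUniformMeasure μ) (f : ℕ → Option (List Bool)) :
    μ (openCl {σ | ∃ n, f n = some σ}) ≤ ∑' n, wfn (f n) := by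
  rw [openCl_eq_iUnion]
  refine le_trans (measure_iUnion_le _) ?_
  exact le_of_eq (tsum_congr fun n => measure_ocyl hμ _)

theorem measure_FF (hμ : IsUniformMeasure μ) :
    μ (openCl {σ | ∃ p, FF ff p = some σ}) = ∑' p, wfn (FF ff p) := by
  rw [openCl_eq_iUnion]
  rw [measure_iUnion ?_ (fun p => measurableSet_ocyl _)]
  · exact tsum_congr fun p => measure_ocyl hμ _
  · intro p q hne
    rcases hp : FF ff p with _ | σ
    · simp [Function.onFun, ocyl, hp]
    · rcases hq : FF ff q with _ | τ
      · simp [Function.onFun, ocyl, hq]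
      · simp only [Function.onFun, hp, hq, ocyl]
        rw [Set.disjoint_left]
        intro Z h1 h2
        exact disjoint_cyl_of_incomp (FF_incomp ff hne hp hq)
          (FF_incomp ff (Ne.symm hne) hq hp) Z h1 h2

theorem wfn_map_cons (b : Bool) (o : Option (List Bool)) :
    wfn (o.map (b :: ·)) = 2⁻¹ * wfn o := by
  cases o
  · simp [wfn]
  · simp [wfn, pow_succ, mul_comm]

theorem tsum_wfn_DD : ∑' p, wfn (DD ff p) = ∑' p, wfn (FF ff p) := by
  set W := ∑' p, wfn (FF ff p) with hW
  calc ∑' p, wfn (DD ff p)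
      = ∑' q : ℕ × ℕ, wfn (DD ff (Nat.pairEquiv q)) := (Nat.pairEquiv.tsum_eq _).symm
    _ = ∑' (i : ℕ) (m : ℕ), wfn (DD ff (Nat.pair i m)) := ENNReal.tsum_prod'
    _ = ∑' i : ℕ, (if i < 2 then 2⁻¹ * W else 0) := by
        refine tsum_congr fun i => ?_
        by_cases hi : i < 2
        · rw [if_pos hi, ← ENNReal.tsum_mul_left]
          refine tsum_congr fun m => ?_
          rw [show DD ff (Nat.pair i m) = (FF ff m).map (i.bodd :: ·) by
            simp [DD, Nat.unpair_pair, hi]]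
          exact wfn_map_cons _ _
        · rw [if_neg hi]
          simp only [show ∀ m, DD ff (Nat.pair i m) = none from fun m => by
            simp [DD, Nat.unpair_pair, hi], wfn]
          simp
    _ = W := by
        rw [tsum_eq_sum (s := ({0, 1} : Finset ℕ)) ?_]
        · have h2 : (2 : ℝ≥0∞) * 2⁻¹ = 1 :=
            ENNReal.mul_inv_cancel (by norm_num) (by norm_num)
          norm_num
          rw [← two_mul, ← mul_assoc, h2, one_mul]
        · intro b hb
          simp only [Finset.mem_insert, Finset.mem_singleton] at hb
          push_neg at hb
          rw [if_neg (by omega)]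

noncomputable def pw (l : List ℕ) : ℝ≥0∞ := (l.map (fun a => wfn (DD ff a))).prod

theorem wfn_flatten (l : List ℕ) :
    wfn ((omapM ff l).map List.flatten) = pw ff l := by
  induction l with
  | nil => simp [pw, wfn]
  | cons a l ih =>
    have e2 : pw ff (a :: l) = wfn (DD ff a) * pw ff l := by simp [pw]
    rw [omapM_cons, e2, ← ih]
    cases DD ff a with
    | none =>
      show (0 : ℝ≥0∞) = 0 * _
      rw [zero_mul]
    | some x =>
      cases omapM ff l with
      | none =>
        show (0 : ℝ≥0∞) = wfn (some x) * 0
        rw [mul_zero]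
      | some L =>
        show wfn (some ((x :: L).flatten)) = wfn (some x) * wfn (some L.flatten)
        simp [wfn, List.flatten_cons, pow_add]

theorem tsum_ite_pw : ∀ j : ℕ,
    ∑' l : List ℕ, (if l.length = j then pw ff l else 0) = (∑' p, wfn (DD ff p)) ^ j := by
  intro j
  induction j with
  | zero =>
    rw [tsum_eq_single ([] : List ℕ)]
    · simp [pw]
    · intro b hb
      rw [if_neg (by simpa [List.length_eq_zero_iff] using hb)]
  | succ j ih =>
    have hinj : Function.Injective (fun q : ℕ × List ℕ => q.1 :: q.2) := by
      rintro ⟨a, t⟩ ⟨a', t'⟩ h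
      simpa using h
    have hsupp : Function.support (fun l : List ℕ => if l.length = j + 1 then pw ff l else 0)
        ⊆ Set.range (fun q : ℕ × List ℕ => q.1 :: q.2) := by
      intro l hl
      cases l with
      | nil => simp at hl
      | cons a t => exact ⟨(a, t), rfl⟩
    rw [← hinj.tsum_eq hsupp]
    have : ∀ q : ℕ × List ℕ,
        (if (q.1 :: q.2).length = j + 1 then pw ff (q.1 :: q.2) else 0)
          = wfn (DD ff q.1) * (if q.2.length = j then pw ff q.2 else 0) := by
      rintro ⟨a, t⟩
      simp only [List.length_cons, Nat.succ_inj, pw, List.map_cons, List.prod_cons]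
      by_cases h : t.length = j
      · rw [if_pos h, if_pos h]
      · rw [if_neg h, if_neg h, mul_zero]
    rw [tsum_congr this, ENNReal.tsum_prod']
    calc ∑' (a : ℕ) (t : List ℕ), wfn (DD ff a) * (if t.length = j then pw ff t else 0)
        = ∑' a : ℕ, wfn (DD ff a) * ((∑' p, wfn (DD ff p)) ^ j) := by
          refine tsum_congr fun a => ?_
          rw [ENNReal.tsum_mul_left, ih]
      _ = (∑' p, wfn (DD ff p)) ^ (j + 1) := by
          rw [ENNReal.tsum_mul_right, pow_succ, mul_comm]

theorem tsum_wfn_GG (k : ℕ) :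
    ∑' n, wfn (GG ff k n) = (∑' p, wfn (DD ff p)) ^ (k + 1) := by
  rw [← Equiv.tsum_eq (Denumerable.eqv (List ℕ)) (fun n => wfn (GG ff k n)),
    ← tsum_ite_pw ff (k + 1)]
  refine tsum_congr fun l => ?_
  show wfn (GG ff k (Encodable.encode l)) = _
  unfold GG
  rw [Denumerable.ofNat_encode]
  split
  · exact wfn_flatten ff l
  · rfl

end MeasureSection


/-! ### Shift and recurrence -/

theorem shift_iterate (Z : ℕ → Bool) (n i : ℕ) : shift^[n] Z i = Z (n + i) := by
  induction n generalizing Z i with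
  | zero => simp
  | succ n ih =>
    rw [Function.iterate_succ_apply, ih]
    show Z (n + i + 1) = Z (n + 1 + i)
    congr 1
    omega

theorem isPrefixOf_append {τ ρ : List Bool} {Z : ℕ → Bool} (hτ : IsPrefixOf τ Z)
    (hρ : IsPrefixOf ρ (shift^[τ.length] Z)) : IsPrefixOf (τ ++ ρ) Z := by
  intro i hi
  rw [List.length_append] at hi
  by_cases h : i < τ.length
  · rw [List.getD_append _ _ _ _ h]
    exact hτ i h
  · push_neg at h
    rw [List.getD_append_right _ _ _ _ h]
    have hj : i - τ.length < ρ.length := by omega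
    have := hρ (i - τ.length) hj
    rw [this, shift_iterate]
    congr 1
    omega

theorem isPrefixOf_cons_shift {σ : List Bool} {Z : ℕ → Bool} {t : ℕ}
    (h : IsPrefixOf σ (shift^[t+1] Z)) : IsPrefixOf (Z t :: σ) (shift^[t] Z) := by
  intro i hi
  cases i with
  | zero =>
    show Z t = shift^[t] Z 0
    rw [shift_iterate, Nat.add_zero]
  | succ i =>
    show σ.getD i false = shift^[t] Z (i + 1)
    have hlt : i < σ.length := by simpa using hi
    rw [h i hlt, shift_iterate, shift_iterate]
    congr 1
    omega

theorem chain {Z : ℕ → Bool}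
    (hU : ∀ n, 1 ≤ n → shift^[n] Z ∈ openCl {σ | ∃ p, FF ff p = some σ}) :
    ∀ k, ∃ L : List (List Bool), L.length = k + 1 ∧
      (∀ x ∈ L, ∃ p, DD ff p = some x) ∧ IsPrefixOf L.flatten Z := by
  intro k
  induction k with
  | zero =>
    obtain ⟨σ, ⟨q, hq⟩, hpre⟩ := hU 1 le_rfl
    refine ⟨[Z 0 :: σ], by simp, ?_, ?_⟩
    · intro x hx
      rw [List.mem_singleton] at hx
      subst hx
      exact (mem_setDD ff).2 ⟨q, hq⟩
    · have h0 : IsPrefixOf (Z 0 :: σ) (shift^[0] Z) := isPrefixOf_cons_shift hpre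
      simpa using h0
  | succ k ih =>
    obtain ⟨L, hlen, hmem, hpre⟩ := ih
    set t := L.flatten.length with ht
    obtain ⟨σ, ⟨q, hq⟩, hp⟩ := hU (t + 1) (by omega)
    have hρ : IsPrefixOf (Z t :: σ) (shift^[t] Z) := isPrefixOf_cons_shift hp
    refine ⟨L ++ [Z t :: σ], by simp [hlen], ?_, ?_⟩
    · intro x hx
      rcases List.mem_append.1 hx with hx | hx
      · exact hmem x hx
      · rw [List.mem_singleton] at hx
        subst hx
        exact (mem_setDD ff).2 ⟨q, hq⟩
    · rw [List.flatten_append]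
      have : List.flatten [Z t :: σ] = Z t :: σ := by simp
      rw [this]
      exact isPrefixOf_append hpre hρ

end Kucera

end KuceraAux

open scoped ENNReal

/-- Kučera's theorem, one direction: a Martin-Löf random sequence is `1`-recurrent in
every Π⁰₁ class of positive measure. -/


theorem mlRandom_oneRecurrent (μ : Measure (ℕ → Bool)) (hμ : IsUniformMeasure μ)
    (Z : ℕ → Bool) (hZ : MLRandom μ Z) :
    ∀ P : Set (ℕ → Bool), Pi01Class P → 0 < μ P →
      ∃ n : ℕ, 1 ≤ n ∧ shift^[n] Z ∈ P := by
  intro P hPi hpos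
  obtain ⟨S, ⟨f, hfcomp, hSf⟩, hP⟩ := hPi
  obtain ⟨g, hgprim, hgequiv⟩ := Kucera.exists_primrec_enum hfcomp
  have hSg : {σ | ∃ n, g n = some σ} = S := by
    rw [hSf]; ext σ; exact hgequiv σ
  by_contra hcon
  push_neg at hcon
  -- all tails land in the open set
  have htails : ∀ n, 1 ≤ n → shift^[n] Z ∈ openCl {σ | ∃ p, Kucera.FF g p = some σ} := by
    intro n hn
    have h1 : shift^[n] Z ∉ P := hcon n hn
    rw [hP, Set.notMem_compl_iff] at h1
    rw [Kucera.openCl_FF_eq g, hSg]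
    exact h1
  -- measure of the open set
  set U := openCl S with hU
  have hUmeas : MeasurableSet U := by
    rw [hU, ← hSg]
    exact Kucera.measurableSet_openCl_enum g
  have huniv : μ Set.univ = 1 := by
    have h0 := hμ []
    have : {Z : ℕ → Bool | IsPrefixOf [] Z} = Set.univ := by
      ext W; simp [IsPrefixOf]
    rw [this] at h0
    simpa using h0
  have hsum : μ U + μ P = 1 := by
    rw [hP]
    rw [measure_add_measure_compl hUmeas]
    exact huniv
  set a := μ U with haDef
  have haTop : a ≠ ⊤ := by
    have : a ≤ 1 := by rw [← hsum]; exact le_self_add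
    exact (lt_of_le_of_lt this ENNReal.one_lt_top).ne
  have ha1 : a < 1 := by
    calc a < a + μ P := ENNReal.lt_add_right haTop hpos.ne'
    _ = 1 := hsum
  have haFF : ∑' p, Kucera.wfn (Kucera.FF g p) = a := by
    rw [← Kucera.measure_FF g hμ, Kucera.openCl_FF_eq g, hSg]
  have haDD : ∑' p, Kucera.wfn (Kucera.DD g p) = a := by
    rw [Kucera.tsum_wfn_DD g, haFF]
  obtain ⟨N, hN⟩ : ∃ N : ℕ, a ^ N ≤ 2⁻¹ := by
    have htd := ENNReal.tendsto_pow_atTop_nhds_zero_of_lt_one ha1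
    have h2 := htd.eventually_le_const (by norm_num : (0 : ℝ≥0∞) < 2⁻¹)
    exact h2.exists
  -- the Martin-Löf test
  set T : ℕ → Set (List Bool) := fun m => {σ | ∃ n, Kucera.GG g (N * m) n = some σ} with hT
  have hMLT : MLTest μ T := by
    constructor
    · refine ⟨fun m n => Kucera.GG g (N * m) n, ?_, fun m => rfl⟩
      have hpr : Primrec (fun p : ℕ × ℕ => Kucera.GG g (N * p.1) p.2) :=
        (Kucera.GG_primrec g hgprim).comp
          (Primrec.nat_mul.comp (Primrec.const N) Primrec.fst) Primrec.snd
      exact hpr.to₂.to_comp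
    · intro m
      calc μ (openCl (T m)) ≤ ∑' n, Kucera.wfn (Kucera.GG g (N * m) n) :=
            Kucera.measure_openCl_le hμ _
        _ = a ^ (N * m + 1) := by rw [Kucera.tsum_wfn_GG g (N * m), haDD]
        _ ≤ a ^ (N * m) := by
            rw [pow_succ]
            exact mul_le_of_le_one_right' ha1.le
        _ = (a ^ N) ^ m := by rw [← pow_mul]
        _ ≤ (2⁻¹) ^ m := pow_le_pow_left' hN m
  obtain ⟨m, hm⟩ := hZ T hMLT
  apply hm
  obtain ⟨L, hlen, hmem, hpre⟩ := Kucera.chain g htails (N * m)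
  refine ⟨L.flatten, ?_, hpre⟩
  rw [hT]
  exact (Kucera.exists_GG_iff g).2 ⟨L, hlen, hmem, rfl⟩
end

section
/- If Z ∈ {0,1}^ℕ is 1-recurrent in every Π⁰₁ class P ⊆ {0,1}^ℕ with λ(P) > 0 (i.e., for every such P there is n ≥ 1 with T^n(Z) ∈ P), then Z is Martin-Löf random. -/
open MeasureTheory

namespace KuceraAux

open MeasureTheory Set

/-- Basic cylinder. -/
def Cyl (σ : List Bool) : Set (ℕ → Bool) := {Z | IsPrefixOf σ Z}

lemma isPrefixOf_nil (Z : ℕ → Bool) : IsPrefixOf [] Z := by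
  intro i hi; simp at hi

lemma cyl_nil : Cyl [] = Set.univ := by
  ext Z; simp [Cyl, isPrefixOf_nil]

lemma isPrefixOf_cons {c : Bool} {τ : List Bool} {Z : ℕ → Bool} :
    IsPrefixOf (c :: τ) Z ↔ c = Z 0 ∧ IsPrefixOf τ (fun i => Z (i + 1)) := by
  constructor
  · intro h
    refine ⟨h 0 (by simp), fun i hi => ?_⟩
    have := h (i + 1) (by simp; omega)
    simpa using this
  · rintro ⟨h0, h⟩ i hi
    cases i with
    | zero => simpa using h0
    | succ j =>
      have := h j (by simp at hi; omega)
      simpa using this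

lemma mem_cyl_singleton {b : Bool} {Z : ℕ → Bool} : Z ∈ Cyl [b] ↔ Z 0 = b := by
  constructor
  · intro h; exact ((isPrefixOf_cons.mp h).1).symm
  · intro h; exact isPrefixOf_cons.mpr ⟨h.symm, isPrefixOf_nil _⟩

lemma openCl_eq_iUnion (S : Set (List Bool)) : openCl S = ⋃ σ ∈ S, Cyl σ := by
  ext Z; simp [openCl, Cyl]

lemma openCl_mono {S T : Set (List Bool)} (h : S ⊆ T) : openCl S ⊆ openCl T := by
  rintro Z ⟨σ, hσ, hp⟩; exact ⟨σ, h hσ, hp⟩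

/-- The cylinder `Cyl σ` is measurable. -/
lemma measurableSet_cyl (σ : List Bool) : MeasurableSet (Cyl σ) := by
  have : Cyl σ = ⋂ i ∈ Finset.range σ.length, (fun Z : ℕ → Bool => Z i) ⁻¹' {σ.getD i false} := by
    ext Z
    simp only [Cyl, Set.mem_setOf_eq, Set.mem_iInter, Set.mem_preimage, Set.mem_singleton_iff,
      Finset.mem_range]
    exact ⟨fun h i hi => (h i hi).symm, fun h i hi => (h i hi).symm⟩
  rw [this]
  exact MeasurableSet.biInter (Finset.range σ.length).countable_toSet
    (fun i _ => (measurable_pi_apply i) (measurableSet_singleton _))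

lemma measurableSet_openCl (S : Set (List Bool)) : MeasurableSet (openCl S) := by
  rw [openCl_eq_iUnion]
  exact MeasurableSet.biUnion S.to_countable fun σ _ => measurableSet_cyl σ

/-- The product σ-algebra on Cantor space is generated by the cylinders. -/
lemma measurableSpace_eq :
    (inferInstance : MeasurableSpace (ℕ → Bool)) = .generateFrom (Set.range Cyl) := by
  apply le_antisymm
  · rw [show (inferInstance : MeasurableSpace (ℕ → Bool)) = MeasurableSpace.pi from rfl,
      MeasurableSpace.pi]
    refine iSup_le fun i => ?_
    intro s hs
    obtain ⟨t, -, rfl⟩ := hs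
    have key : ∀ b : Bool, MeasurableSet[MeasurableSpace.generateFrom (Set.range Cyl)]
        ((fun Z : ℕ → Bool => Z i) ⁻¹' {b}) := by
      intro b
      have he : (fun Z : ℕ → Bool => Z i) ⁻¹' {b}
          = ⋃ ρ : Fin i → Bool, Cyl (List.ofFn ρ ++ [b]) := by
        ext Z
        simp only [Set.mem_preimage, Set.mem_singleton_iff, Set.mem_iUnion]
        constructor
        · intro hZ
          refine ⟨fun j => Z j, fun k hk => ?_⟩
          have hlen : (List.ofFn (fun j : Fin i => Z j)).length = i := by simp
          rcases lt_or_ge k i with hki | hki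
          · rw [List.getD_eq_getElem _ _ (by simp; omega)]
            rw [List.getElem_append_left (by simpa using hki)]
            simp
          · have hk' : k = i := by simp at hk; omega
            subst hk'
            rw [List.getD_eq_getElem _ _ (by simp)]
            rw [List.getElem_append_right (by simp)]
            simp [hZ]
        · rintro ⟨ρ, hρ⟩
          have := hρ i (by simp)
          rw [List.getD_eq_getElem _ _ (by simp)] at this
          rw [List.getElem_append_right (by simp)] at this
          simpa using this.symm
      rw [he]
      exact MeasurableSet.iUnion fun ρ => MeasurableSpace.measurableSet_generateFrom ⟨_, rfl⟩
    have ht : (fun Z : ℕ → Bool => Z i) ⁻¹' t = ⋃ b ∈ t, (fun Z : ℕ → Bool => Z i) ⁻¹' {b} := by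
      ext Z; simp
    rw [ht]
    exact MeasurableSet.biUnion t.to_countable fun b _ => key b
  · refine MeasurableSpace.generateFrom_le ?_
    rintro s ⟨σ, rfl⟩
    exact measurableSet_cyl σ

lemma cyl_subset_of_le {σ τ : List Bool} (hlen : σ.length ≤ τ.length)
    (h : ∀ i, i < σ.length → σ.getD i false = τ.getD i false) : Cyl τ ⊆ Cyl σ := by
  intro Z hZ i hi
  rw [h i hi]
  exact hZ i (lt_of_lt_of_le hi hlen)

lemma isPiSystem_cyl : IsPiSystem (Set.range Cyl) := by
  rintro s ⟨σ, rfl⟩ t ⟨τ, rfl⟩ ⟨Z, hZσ, hZτ⟩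
  rcases le_total σ.length τ.length with h | h
  · have : Cyl σ ∩ Cyl τ = Cyl τ := by
      apply Set.inter_eq_self_of_subset_right
      exact cyl_subset_of_le h fun i hi => by
        rw [hZσ i hi, ← hZτ i (lt_of_lt_of_le hi h)]
    rw [this]; exact ⟨τ, rfl⟩
  · have : Cyl σ ∩ Cyl τ = Cyl σ := by
      apply Set.inter_eq_self_of_subset_left
      exact cyl_subset_of_le h fun i hi => by
        rw [hZτ i hi, ← hZσ i (lt_of_lt_of_le hi h)]
    rw [this]; exact ⟨σ, rfl⟩

/-- Prepend one bit to an infinite sequence. -/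
def consSeq (b : Bool) (Z : ℕ → Bool) : ℕ → Bool := fun i =>
  match i with
  | 0 => b
  | j + 1 => Z j

lemma measurable_consSeq (b : Bool) : Measurable (consSeq b) := by
  apply measurable_pi_lambda
  intro i
  cases i with
  | zero => exact measurable_const
  | succ j => exact measurable_pi_apply j

lemma consSeq_preimage_cyl_cons (b c : Bool) (τ : List Bool) :
    consSeq b ⁻¹' Cyl (c :: τ) = if c = b then Cyl τ else ∅ := by
  ext Z
  have hmem : Z ∈ consSeq b ⁻¹' Cyl (c :: τ) ↔ IsPrefixOf (c :: τ) (consSeq b Z) := Iff.rfl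
  rw [hmem, isPrefixOf_cons]
  have h1 : consSeq b Z 0 = b := rfl
  have h2 : (fun i => consSeq b Z (i + 1)) = Z := rfl
  rw [h1, h2]
  by_cases hc : c = b <;> simp [hc, Cyl]

lemma measure_univ_eq_one {μ : Measure (ℕ → Bool)} (hμ : IsUniformMeasure μ) :
    μ Set.univ = 1 := by
  have := hμ []
  simp only [List.length_nil, pow_zero] at this
  rw [← cyl_nil]
  exact this

lemma cyl_measure {μ : Measure (ℕ → Bool)} (hμ : IsUniformMeasure μ) (σ : List Bool) :
    μ (Cyl σ) = 2⁻¹ ^ σ.length := hμ σ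

/-- Key scaling identity: the pushforward of `μ` under prepending a bit is
twice the restriction of `μ` to the cylinder of that bit. -/
lemma map_consSeq {μ : Measure (ℕ → Bool)} (hμ : IsUniformMeasure μ) (b : Bool) :
    μ.map (consSeq b) = (2 : ENNReal) • μ.restrict (Cyl [b]) := by
  haveI : IsFiniteMeasure μ := ⟨by rw [measure_univ_eq_one hμ]; exact ENNReal.one_lt_top⟩
  haveI : IsFiniteMeasure (μ.map (consSeq b)) := by
    constructor
    rw [Measure.map_apply (measurable_consSeq b) MeasurableSet.univ]
    simp only [Set.preimage_univ]
    rw [measure_univ_eq_one hμ]; exact ENNReal.one_lt_top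
  refine ext_of_generate_finite (Set.range Cyl) measurableSpace_eq isPiSystem_cyl ?_ ?_
  · rintro s ⟨σ, rfl⟩
    rw [Measure.map_apply (measurable_consSeq b) (measurableSet_cyl σ)]
    rw [Measure.smul_apply, Measure.restrict_apply (measurableSet_cyl σ)]
    cases σ with
    | nil =>
      rw [cyl_nil, Set.preimage_univ, Set.univ_inter, measure_univ_eq_one hμ,
        cyl_measure hμ [b]]
      simp only [List.length_cons, List.length_nil, zero_add, pow_one, smul_eq_mul]
      rw [ENNReal.mul_inv_cancel (by norm_num) (by norm_num)]
    | cons c τ =>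
      rw [consSeq_preimage_cyl_cons]
      by_cases hc : c = b
      · subst hc
        have : Cyl (c :: τ) ∩ Cyl [c] = Cyl (c :: τ) := by
          apply Set.inter_eq_self_of_subset_left
          intro Z hZ
          exact mem_cyl_singleton.mpr ((isPrefixOf_cons.mp hZ).1).symm
        rw [if_pos rfl, this, cyl_measure hμ τ, cyl_measure hμ (c :: τ)]
        simp only [List.length_cons, smul_eq_mul, pow_succ]
        rw [mul_comm ((2:ENNReal)⁻¹ ^ τ.length) 2⁻¹, ← mul_assoc,
          ENNReal.mul_inv_cancel (by norm_num) (by norm_num), one_mul]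
      · have : Cyl (c :: τ) ∩ Cyl [b] = ∅ := by
          ext Z
          simp only [Set.mem_inter_iff, Set.mem_empty_iff_false, iff_false, not_and]
          intro hZ hZb
          have h1 : Z 0 = c := ((isPrefixOf_cons.mp hZ).1).symm
          have h2 : Z 0 = b := mem_cyl_singleton.mp hZb
          exact hc (h1 ▸ h2)
        rw [if_neg hc, this]
        simp
  · rw [Measure.map_apply (measurable_consSeq b) MeasurableSet.univ]
    simp only [Set.preimage_univ, Measure.smul_apply,
      Measure.restrict_apply MeasurableSet.univ, Set.univ_inter, smul_eq_mul]
    rw [measure_univ_eq_one hμ, cyl_measure hμ [b]]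
    simp only [List.length_cons, List.length_nil, zero_add, pow_one]
    rw [ENNReal.mul_inv_cancel (by norm_num) (by norm_num)]

lemma measure_preimage_consSeq {μ : Measure (ℕ → Bool)} (hμ : IsUniformMeasure μ) (b : Bool)
    {A : Set (ℕ → Bool)} (hA : MeasurableSet A) :
    μ (consSeq b ⁻¹' A) = 2 * μ (A ∩ Cyl [b]) := by
  have h := map_consSeq hμ b
  calc μ (consSeq b ⁻¹' A) = μ.map (consSeq b) A :=
        (Measure.map_apply (measurable_consSeq b) hA).symm
    _ = 2 * μ (A ∩ Cyl [b]) := by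
        rw [h, Measure.smul_apply, Measure.restrict_apply hA, smul_eq_mul]

/-- The set of strings obtained by removing the first `n` bits of strings in `R`
of length at least `n`. -/
def dropSet (n : ℕ) (R : Set (List Bool)) : Set (List Bool) :=
  {τ | ∃ σ ∈ R, n ≤ σ.length ∧ σ.drop n = τ}

lemma getD_drop (σ : List Bool) (n i : ℕ) (d : Bool) (h : n + i < σ.length) :
    (σ.drop n).getD i d = σ.getD (n + i) d := by
  rw [List.getD_eq_getElem _ _ (by simp; omega), List.getD_eq_getElem _ _ h]
  simp [List.getElem_drop]

lemma step_bound {μ : Measure (ℕ → Bool)} (hμ : IsUniformMeasure μ) (R : Set (List Bool)) :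
    μ (openCl (dropSet 1 R)) ≤ 2 * μ (openCl R) := by
  set A := openCl R with hA
  have hAm : MeasurableSet A := measurableSet_openCl R
  have hsub : openCl (dropSet 1 R) ⊆ (consSeq false ⁻¹' A) ∪ (consSeq true ⁻¹' A) := by
    rintro W ⟨τ, ⟨σ, hσR, hσlen, rfl⟩, hp⟩
    set b := σ.getD 0 false with hb
    have hmem : consSeq b W ∈ A := by
      refine ⟨σ, hσR, ?_⟩
      intro i hi
      cases i with
      | zero => rfl
      | succ j =>
        have hj : j < (σ.drop 1).length := by simp; omega
        have h2 := hp j hj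
        rw [getD_drop σ 1 j false (by omega)] at h2
        show σ.getD (j + 1) false = W j
        rw [show j + 1 = 1 + j by omega]
        exact h2
    cases hbv : b with
    | false => left; rw [hbv] at hmem; exact hmem
    | true => right; rw [hbv] at hmem; exact hmem
  calc μ (openCl (dropSet 1 R))
      ≤ μ ((consSeq false ⁻¹' A) ∪ (consSeq true ⁻¹' A)) := measure_mono hsub
    _ ≤ μ (consSeq false ⁻¹' A) + μ (consSeq true ⁻¹' A) := measure_union_le _ _
    _ = 2 * μ (A ∩ Cyl [false]) + 2 * μ (A ∩ Cyl [true]) := by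
        rw [measure_preimage_consSeq hμ false hAm, measure_preimage_consSeq hμ true hAm]
    _ = 2 * (μ (A ∩ Cyl [false]) + μ (A ∩ Cyl [true])) := by ring
    _ = 2 * μ A := by
        congr 1
        have hdiff : A \ Cyl [false] = A ∩ Cyl [true] := by
          ext Z
          simp only [Set.mem_diff, Set.mem_inter_iff]
          constructor
          · rintro ⟨h1, h2⟩
            refine ⟨h1, mem_cyl_singleton.mpr ?_⟩
            cases h0 : Z 0 with
            | false => exact absurd (mem_cyl_singleton.mpr h0) h2
            | true => rfl
          · rintro ⟨h1, h2⟩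
            refine ⟨h1, fun hc => ?_⟩
            have := mem_cyl_singleton.mp hc
            have := mem_cyl_singleton.mp h2
            simp_all
        rw [← hdiff]
        exact measure_inter_add_diff A (measurableSet_cyl [false])

lemma dropSet_succ (n : ℕ) (R : Set (List Bool)) :
    dropSet (n + 1) R = dropSet 1 (dropSet n R) := by
  ext τ
  constructor
  · rintro ⟨σ, hσ, hlen, rfl⟩
    refine ⟨σ.drop n, ⟨σ, hσ, by omega, rfl⟩, by simp; omega, ?_⟩
    rw [List.drop_drop]
  · rintro ⟨υ, ⟨σ, hσ, hlen, rfl⟩, hlen2, rfl⟩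
    refine ⟨σ, hσ, ?_, ?_⟩
    · simp at hlen2; omega
    · rw [List.drop_drop]

lemma dropSet_zero (R : Set (List Bool)) : dropSet 0 R = R := by
  ext τ
  simp [dropSet]

lemma drop_bound {μ : Measure (ℕ → Bool)} (hμ : IsUniformMeasure μ) (n : ℕ)
    (R : Set (List Bool)) :
    μ (openCl (dropSet n R)) ≤ 2 ^ n * μ (openCl R) := by
  induction n generalizing R with
  | zero => rw [dropSet_zero]; simp
  | succ k ih =>
    rw [dropSet_succ]
    calc μ (openCl (dropSet 1 (dropSet k R))) ≤ 2 * μ (openCl (dropSet k R)) :=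
          step_bound hμ _
      _ ≤ 2 * (2 ^ k * μ (openCl R)) := by
          exact mul_le_mul_right (ih R) 2
      _ = 2 ^ (k + 1) * μ (openCl R) := by ring

lemma shift_iterate (Z : ℕ → Bool) (n i : ℕ) : shift^[n] Z i = Z (n + i) := by
  induction n generalizing Z with
  | zero => simp
  | succ k ih =>
    rw [Function.iterate_succ_apply, ih]
    show Z (k + i + 1) = Z (k + 1 + i)
    congr 1
    omega

lemma tail_iterate_eq_drop (n : ℕ) (l : List Bool) : List.tail^[n] l = l.drop n := by
  induction n generalizing l with
  | zero => simp
  | succ k ih =>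
    rw [Function.iterate_succ_apply, ih, ← List.drop_one, List.drop_drop, Nat.add_comm]

/-- Computable enumeration of the union of the `dropSet`s. -/
lemma ce_union {f : ℕ → ℕ → Option (List Bool)} (hf : Computable₂ f)
    (S : ℕ → Set (List Bool)) (hSf : ∀ m, S m = {σ | ∃ j, f m j = some σ}) :
    CEStrings (⋃ i : ℕ, dropSet (i + 1) (S (2 * (i + 1) + 2))) := by
  refine ⟨fun k => (f (2 * k.unpair.1 + 4) k.unpair.2).bind
    (fun σ => if k.unpair.1 + 1 ≤ σ.length then some (σ.drop (k.unpair.1 + 1)) else none),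
    ?_, ?_⟩
  · apply Computable.option_bind
    · apply hf.comp
      · exact Primrec.to_comp <| (Primrec.nat_add.comp
          ((Primrec.nat_mul.comp (Primrec.const 2)
            (Primrec.fst.comp Primrec.unpair))) (Primrec.const 4))
      · exact Primrec.to_comp <| Primrec.snd.comp Primrec.unpair
    · have hdrop : Primrec₂ (fun (n : ℕ) (l : List Bool) => l.drop n) := by
        have h : Primrec fun p : ℕ × List Bool => List.tail^[p.1] p.2 :=
          Primrec.nat_iterate Primrec.fst Primrec.snd
            ((Primrec.list_tail.comp Primrec.snd).to₂)
        have h2 : Primrec₂ fun (n : ℕ) (l : List Bool) => List.tail^[n] l := h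
        exact h2.of_eq fun n l => tail_iterate_eq_drop n l
      have hn : Primrec fun p : ℕ × List Bool => p.1.unpair.1 + 1 :=
        Primrec.succ.comp (Primrec.fst.comp (Primrec.unpair.comp Primrec.fst))
      have hcond : PrimrecPred fun p : ℕ × List Bool => p.1.unpair.1 + 1 ≤ p.2.length :=
        Primrec.nat_le.comp hn (Primrec.list_length.comp Primrec.snd)
      have h3 : Primrec fun p : ℕ × List Bool =>
          if p.1.unpair.1 + 1 ≤ p.2.length then some (p.2.drop (p.1.unpair.1 + 1)) else none :=
        Primrec.ite hcond
          (Primrec.option_some.comp (hdrop.comp hn Primrec.snd))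
          (Primrec.const none)
      exact Primrec₂.to_comp (h3 : Primrec₂ fun (a : ℕ) (σ : List Bool) =>
        if a.unpair.1 + 1 ≤ σ.length then some (σ.drop (a.unpair.1 + 1)) else none)
  · ext τ
    simp only [Set.mem_iUnion, Set.mem_setOf_eq]
    constructor
    · rintro ⟨i, σ, hσ, hlen, rfl⟩
      rw [hSf] at hσ
      obtain ⟨j, hj⟩ := hσ
      refine ⟨Nat.pair i j, ?_⟩
      rw [Nat.unpair_pair]
      simp only
      rw [show 2 * i + 4 = 2 * (i + 1) + 2 by ring, hj]
      show (if i + 1 ≤ σ.length then some (σ.drop (i + 1)) else none) = some (σ.drop (i + 1))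
      rw [if_pos hlen]
    · rintro ⟨k, hk⟩
      rcases ho : f (2 * k.unpair.1 + 4) k.unpair.2 with _ | σ
      · rw [ho] at hk; simp at hk
      · rw [ho] at hk
        rw [show (some σ).bind (fun σ => if k.unpair.1 + 1 ≤ σ.length
          then some (σ.drop (k.unpair.1 + 1)) else none)
          = if k.unpair.1 + 1 ≤ σ.length then some (σ.drop (k.unpair.1 + 1)) else none
          from rfl] at hk
        by_cases hlen : k.unpair.1 + 1 ≤ σ.length
        · rw [if_pos hlen] at hk
          refine ⟨k.unpair.1, σ, ?_, hlen, by injection hk⟩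
          rw [hSf]
          exact ⟨k.unpair.2, by rw [show 2 * (k.unpair.1 + 1) + 2 = 2 * k.unpair.1 + 4 by ring]; exact ho⟩
        · rw [if_neg hlen] at hk; simp at hk

end KuceraAux

namespace KuceraAux

lemma openCl_iUnion (A : ℕ → Set (List Bool)) : openCl (⋃ i, A i) = ⋃ i, openCl (A i) := by
  ext W
  simp only [openCl, Set.mem_iUnion, Set.mem_setOf_eq]
  constructor
  · rintro ⟨σ, hσ, hp⟩
    obtain ⟨i, hi⟩ := hσ
    exact ⟨i, σ, hi, hp⟩
  · rintro ⟨i, σ, hi, hp⟩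
    exact ⟨σ, ⟨i, hi⟩, hp⟩

lemma tsum_calc : ∑' i : ℕ, (2:ENNReal)⁻¹ ^ (i + 3) = 4⁻¹ := by
  simp only [pow_add]
  rw [ENNReal.tsum_mul_right, ENNReal.tsum_geometric]
  rw [show (1:ENNReal) - 2⁻¹ = 2⁻¹ by rw [ENNReal.one_sub_inv_two]]
  rw [show ((2:ENNReal)⁻¹)⁻¹ = 2 by simp]
  rw [show ((2:ENNReal)⁻¹) ^ 3 = 8⁻¹ by rw [← ENNReal.inv_pow]; norm_num]
  rw [show (8:ENNReal)⁻¹ = (2 * 4)⁻¹ by norm_num, ENNReal.mul_inv (by norm_num) (by norm_num)]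
  rw [← mul_assoc, ENNReal.mul_inv_cancel (by norm_num) (by norm_num), one_mul]

end KuceraAux

/-- Kučera's theorem, converse direction: if `Z` is `1`-recurrent in every Π⁰₁ class of
positive measure, then `Z` is Martin-Löf random. -/
theorem mlRandom_of_oneRecurrent (μ : Measure (ℕ → Bool)) (hμ : IsUniformMeasure μ)
    (Z : ℕ → Bool)
    (hrec : ∀ P : Set (ℕ → Bool), Pi01Class P → 0 < μ P →
      ∃ n : ℕ, 1 ≤ n ∧ shift^[n] Z ∈ P) :
    MLRandom μ Z := by
  intro S hS
  by_contra hcon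
  push_neg at hcon
  obtain ⟨⟨f, hf, hSf⟩, hbound⟩ := hS
  classical
  set D : Set (List Bool) := ⋃ i : ℕ, KuceraAux.dropSet (i + 1) (S (2 * (i + 1) + 2)) with hD
  have hCE : CEStrings D := KuceraAux.ce_union hf S hSf
  have hDbound : μ (openCl D) ≤ 4⁻¹ := by
    rw [hD, KuceraAux.openCl_iUnion]
    calc μ (⋃ i : ℕ, openCl (KuceraAux.dropSet (i + 1) (S (2 * (i + 1) + 2))))
        ≤ ∑' i : ℕ, μ (openCl (KuceraAux.dropSet (i + 1) (S (2 * (i + 1) + 2)))) :=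
          measure_iUnion_le _
      _ ≤ ∑' i : ℕ, 2⁻¹ ^ (i + 3) := by
          refine ENNReal.tsum_le_tsum fun i => ?_
          calc μ (openCl (KuceraAux.dropSet (i + 1) (S (2 * (i + 1) + 2))))
              ≤ 2 ^ (i + 1) * μ (openCl (S (2 * (i + 1) + 2))) :=
                KuceraAux.drop_bound hμ _ _
            _ ≤ 2 ^ (i + 1) * 2⁻¹ ^ (2 * (i + 1) + 2) := mul_le_mul_right (hbound _) _
            _ = 2⁻¹ ^ (i + 3) := by
                rw [show 2 * (i + 1) + 2 = (i + 1) + (i + 3) by ring,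
                  pow_add ((2:ENNReal)⁻¹) (i + 1) (i + 3), ← mul_assoc]
                rw [show (2:ENNReal) ^ (i + 1) * 2⁻¹ ^ (i + 1) = 1 by
                  rw [← mul_pow, ENNReal.mul_inv_cancel (by norm_num) (by norm_num), one_pow]]
                rw [one_mul]
      _ = 4⁻¹ := KuceraAux.tsum_calc
  have hpos : 0 < μ (openCl D)ᶜ := by
    by_contra h
    push_neg at h
    have h0 : μ (openCl D)ᶜ = 0 := le_antisymm h zero_le
    have h1 : μ Set.univ ≤ μ (openCl D) + μ (openCl D)ᶜ := by
      rw [← Set.union_compl_self (openCl D)]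
      exact measure_union_le _ _
    rw [h0, add_zero, KuceraAux.measure_univ_eq_one hμ] at h1
    have h2 : (1:ENNReal) ≤ 4⁻¹ := le_trans h1 hDbound
    norm_num at h2
  obtain ⟨n, hn1, hnP⟩ := hrec _ ⟨D, hCE, rfl⟩ hpos
  apply hnP
  obtain ⟨σ, hσS, hσZ⟩ := hcon (2 * n + 2)
  have hlen : 2 * n + 2 ≤ σ.length := by
    have hcylsub : {W | IsPrefixOf σ W} ⊆ openCl (S (2 * n + 2)) := fun W hW => ⟨σ, hσS, hW⟩
    have h1 : μ {W | IsPrefixOf σ W} ≤ 2⁻¹ ^ (2 * n + 2) :=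
      le_trans (measure_mono hcylsub) (hbound _)
    rw [hμ σ] at h1
    rw [← ENNReal.inv_pow, ← ENNReal.inv_pow, ENNReal.inv_le_inv] at h1
    have h2 : (2:ℕ) ^ (2 * n + 2) ≤ 2 ^ σ.length := by exact_mod_cast h1
    exact (Nat.pow_le_pow_iff_right (by norm_num)).mp h2
  obtain ⟨i, rfl⟩ : ∃ i, n = i + 1 := ⟨n - 1, by omega⟩
  refine ⟨σ.drop (i + 1), ?_, ?_⟩
  · rw [hD]
    exact Set.mem_iUnion.mpr ⟨i, σ, hσS, by omega, rfl⟩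
  · intro j hj
    have hj' : (i + 1) + j < σ.length := by
      simp only [List.length_drop] at hj; omega
    rw [KuceraAux.getD_drop σ (i + 1) j false hj']
    rw [hσZ ((i + 1) + j) hj', KuceraAux.shift_iterate]
end

section
/- Fix k ≥ 1 and let X_k = {0,1}^(ℕ^k) with the k commuting shift operators T₁, …, T_k. Let P ⊆ X_k be a non-empty clopen set. Then every weakly (Kurtz) random Z ∈ X_k is multiply recurrent in P, i.e., there is n ≥ 1 with Z ∈ ⋂_{1≤i≤k} T_i^{-n}(P). -/
open MeasureTheory

/-- The `i`-th shift operator on `X_k = {0,1}^(ℕ^k)`: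
`T_i Z (u₁,…,u_k) = Z (u₁,…,u_i + 1,…,u_k)`. -/
def shiftK {k : ℕ} (i : Fin k) (Z : (Fin k → ℕ) → Bool) : (Fin k → ℕ) → Bool :=
  fun u => Z (fun j => if j = i then u j + 1 else u j)

/-- The array of size `n` coded by `(n, l)` (the list `l` records the `n ^ k` values of a
map `{0,…,n-1}^k → {0,1}` in the order given by `finFunctionFinEquiv`) agrees with `Z`
on its domain. -/
def ArrayAgrees {k : ℕ} (n : ℕ) (l : List Bool) (Z : (Fin k → ℕ) → Bool) : Prop :=
  l.length = n ^ k ∧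
    ∀ u : Fin k → Fin n, l.getD (finFunctionFinEquiv u : ℕ) false = Z (fun j => (u j : ℕ))

/-- The open subset `⟦S⟧` of `X_k` generated by a set `S` of coded arrays. -/
def openClK {k : ℕ} (S : Set (ℕ × List Bool)) : Set ((Fin k → ℕ) → Bool) :=
  {Z | ∃ p ∈ S, ArrayAgrees p.1 p.2 Z}

/-- A set of coded arrays is computably enumerable. -/
def CEArrays (S : Set (ℕ × List Bool)) : Prop :=
  ∃ f : ℕ → Option (ℕ × List Bool), Computable f ∧ S = {σ | ∃ n, f n = some σ}

/-- A Π⁰₁ class in `X_k`: the complement of the open set generated by a c.e. set of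
arrays. -/
def Pi01ClassK {k : ℕ} (P : Set ((Fin k → ℕ) → Bool)) : Prop :=
  ∃ S : Set (ℕ × List Bool), CEArrays S ∧ P = (openClK S)ᶜ

/-- `μ` is the uniform (fair-coin) product measure on `X_k`: the cylinder determined by
an array of size `n` has measure `2^{-n^k}`. -/
def IsUniformMeasureK {k : ℕ} (μ : MeasureTheory.Measure ((Fin k → ℕ) → Bool)) : Prop :=
  ∀ (n : ℕ) (l : List Bool), l.length = n ^ k →
    μ {Z | ArrayAgrees n l Z} = 2⁻¹ ^ (n ^ k)

/-- `Z` is multiply recurrent in `P ⊆ X_k`: there is `n ≥ 1` with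
`Z ∈ ⋂_{1 ≤ i ≤ k} T_i^{-n} P`. -/
def MultiplyRecurrentK {k : ℕ} (P : Set ((Fin k → ℕ) → Bool))
    (Z : (Fin k → ℕ) → Bool) : Prop :=
  ∃ n : ℕ, 1 ≤ n ∧ Z ∈ ⋂ i : Fin k, (shiftK i)^[n] ⁻¹' P

/-- `Z ∈ X_k` is weakly (Kurtz) random w.r.t. `μ`: it belongs to no Π⁰₁ class of
measure `0`. -/
def KurtzRandomK {k : ℕ} (μ : MeasureTheory.Measure ((Fin k → ℕ) → Bool))
    (Z : (Fin k → ℕ) → Bool) : Prop :=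
  ∀ P : Set ((Fin k → ℕ) → Bool), Pi01ClassK P → μ P = 0 → Z ∉ P

open scoped ENNReal

namespace MRAux

def dig (m c j : ℕ) : ℕ := c / m ^ j % m

theorem dig_ffe {k m : ℕ} (u : Fin k → Fin m) (j : Fin k) :
    dig m (finFunctionFinEquiv u : ℕ) (j : ℕ) = u j := by
  have h : finFunctionFinEquiv.symm (finFunctionFinEquiv u) = u :=
    Equiv.symm_apply_apply _ _
  have h2 : ((finFunctionFinEquiv.symm (finFunctionFinEquiv u) : Fin k → Fin m) j : ℕ)
      = (finFunctionFinEquiv u : ℕ) / m ^ (j : ℕ) % m := rfl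
  rw [h] at h2
  simpa [dig] using h2.symm

def sIdx (k m n N i c : ℕ) : ℕ :=
  (List.range k).foldl (fun acc j => acc + (dig m c j + if j = i then n else 0) * N ^ j) 0

theorem foldl_add_range (F : ℕ → ℕ) (k a : ℕ) :
    (List.range k).foldl (fun acc j => acc + F j) a = a + ∑ j ∈ Finset.range k, F j := by
  induction k generalizing a with
  | zero => simp
  | succ k ih =>
      rw [List.range_succ, List.foldl_append, ih, Finset.sum_range_succ]
      simp [Nat.add_assoc]

theorem sIdx_eq {k m : ℕ} (n N : ℕ) (i : Fin k) (u : Fin k → Fin m) (q : Fin k → Fin N)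
    (hq : ∀ j, (q j : ℕ) = (u j : ℕ) + if j = i then n else 0) :
    sIdx k m n N (i : ℕ) (finFunctionFinEquiv u : ℕ) = (finFunctionFinEquiv q : ℕ) := by
  have hffe : (finFunctionFinEquiv q : ℕ) = ∑ j : Fin k, (q j : ℕ) * N ^ (j : ℕ) :=
    finFunctionFinEquiv_apply q
  rw [sIdx, foldl_add_range, Nat.zero_add, hffe,
    ← Fin.sum_univ_eq_sum_range (fun j => (dig m (finFunctionFinEquiv u : ℕ) j
      + if j = (i : ℕ) then n else 0) * N ^ j) k]
  refine Finset.sum_congr rfl fun j _ => ?_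
  rw [dig_ffe u j, hq j]
  congr 1
  congr 1
  simp [Fin.ext_iff]


def chk (k m : ℕ) (w : List Bool) (n N : ℕ) (l : List Bool) : Bool :=
  (List.range k).all fun i => (List.range (m ^ k)).all fun c =>
    l.getD (sIdx k m n N i c) false == w.getD c false

def good (k m : ℕ) (w : List Bool) (p : ℕ × List Bool) : Bool :=
  decide (p.2.length = p.1 ^ k) &&
    (List.range (p.1 + 1)).any fun n =>
      decide (1 ≤ n) && decide (n + m ≤ p.1) && chk k m w n p.1 p.2

def SS (k m : ℕ) (w : List Bool) : Set (ℕ × List Bool) := {p | good k m w p = true}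

theorem chk_iff {k m : ℕ} {w : List Bool} {n N : ℕ} {l : List Bool} :
    chk k m w n N l = true ↔ ∀ i < k, ∀ c < m ^ k,
      l.getD (sIdx k m n N i c) false = w.getD c false := by
  simp [chk, List.all_eq_true, List.mem_range]

theorem good_iff {k m : ℕ} {w : List Bool} {p : ℕ × List Bool} :
    good k m w p = true ↔ p.2.length = p.1 ^ k ∧
      ∃ n, 1 ≤ n ∧ n + m ≤ p.1 ∧ chk k m w n p.1 p.2 = true := by
  constructor
  · intro h
    rw [good, Bool.and_eq_true, List.any_eq_true] at h
    obtain ⟨h1, n, _, h2⟩ := h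
    rw [Bool.and_eq_true, Bool.and_eq_true] at h2
    exact ⟨by simpa using h1, n, by simpa using h2.1.1, by simpa using h2.1.2, h2.2⟩
  · rintro ⟨h1, n, hn1, hn2, h2⟩
    rw [good, Bool.and_eq_true, List.any_eq_true]
    refine ⟨by simpa using h1, n, List.mem_range.2 (by omega), ?_⟩
    rw [Bool.and_eq_true, Bool.and_eq_true]
    exact ⟨⟨by simpa using hn1, by simpa using hn2⟩, h2⟩

theorem shiftK_iterate {k : ℕ} (i : Fin k) (n : ℕ) (Z : (Fin k → ℕ) → Bool)
    (u : Fin k → ℕ) :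
    (shiftK i)^[n] Z u = Z (fun j => if j = i then u j + n else u j) := by
  induction n generalizing Z with
  | zero => simp
  | succ n ih =>
      rw [Function.iterate_succ_apply, ih]
      rw [shiftK]
      congr 1
      funext j
      by_cases h : j = i <;> simp [h] <;> omega

theorem getD_ofFn {α : Type*} {L : ℕ} (f : Fin L → α) (c : ℕ) (hc : c < L) (d : α) :
    (List.ofFn f).getD c d = f ⟨c, hc⟩ := by
  rw [List.getD_eq_getElem _ _ (by simpa using hc), List.getElem_ofFn]

theorem primrec_pow : Primrec₂ ((· ^ ·) : ℕ → ℕ → ℕ) := by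
  have h : Primrec fun p : ℕ × ℕ => (fun x => x * p.1)^[p.2] 1 :=
    Primrec.nat_iterate Primrec.snd (Primrec.const 1)
      (Primrec.nat_mul.comp Primrec.snd (Primrec.fst.comp Primrec.fst)).to₂
  have h2 : ∀ p : ℕ × ℕ, (fun x => x * p.1)^[p.2] 1 = p.1 ^ p.2 := by
    intro ⟨b, e⟩
    induction e with
    | zero => simp
    | succ e ih => rw [Function.iterate_succ_apply', ih, pow_succ]
  exact h.of_eq h2

theorem primrec_band : Primrec₂ (· && ·) :=
  Primrec.dom_finite (fun p : Bool × Bool => p.1 && p.2)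

theorem primrec_bor : Primrec₂ (· || ·) :=
  Primrec.dom_finite (fun p : Bool × Bool => p.1 || p.2)

theorem primrec_all {α β : Type} [Primcodable α] [Primcodable β] {f : α → List β}
    {p : α → β → Bool} (hf : Primrec f) (hp : Primrec₂ p) :
    Primrec fun a => (f a).all (p a) := by
  have h : Primrec fun a => (f a).foldl (fun s b => s && p a b) true :=
    Primrec.list_foldl hf (Primrec.const true)
      (primrec_band.comp (Primrec.fst.comp Primrec.snd)
        (hp.comp Primrec.fst (Primrec.snd.comp Primrec.snd))).to₂
  refine h.of_eq fun a => ?_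
  have key : ∀ (l : List β) (b : Bool), l.foldl (fun s x => s && p a x) b = (b && l.all (p a)) := by
    intro l
    induction l with
    | nil => simp
    | cons x l ih => intro b; simp [ih, Bool.and_assoc]
  simpa using key (f a) true

theorem primrec_any {α β : Type} [Primcodable α] [Primcodable β] {f : α → List β}
    {p : α → β → Bool} (hf : Primrec f) (hp : Primrec₂ p) :
    Primrec fun a => (f a).any (p a) := by
  have h : Primrec fun a => (f a).foldl (fun s b => s || p a b) false :=
    Primrec.list_foldl hf (Primrec.const false)
      (primrec_bor.comp (Primrec.fst.comp Primrec.snd)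
        (hp.comp Primrec.fst (Primrec.snd.comp Primrec.snd))).to₂
  refine h.of_eq fun a => ?_
  have key : ∀ (l : List β) (b : Bool), l.foldl (fun s x => s || p a x) b = (b || l.any (p a)) := by
    intro l
    induction l with
    | nil => simp
    | cons x l ih => intro b; simp [ih, Bool.or_assoc]
  simpa using key (f a) false

theorem primrec_dig (m : ℕ) : Primrec₂ (dig m) :=
  Primrec.nat_mod.comp
    (Primrec.nat_div.comp Primrec.fst (primrec_pow.comp (Primrec.const m) Primrec.snd))
    (Primrec.const m)

theorem primrec_sIdx (k m : ℕ) {α : Type} [Primcodable α] {fn fN fi fc : α → ℕ}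
    (hn : Primrec fn) (hN : Primrec fN) (hi : Primrec fi) (hc : Primrec fc) :
    Primrec fun a => sIdx k m (fn a) (fN a) (fi a) (fc a) := by
  have h : Primrec fun a => (List.range k).foldl
      (fun acc j => acc + (dig m (fc a) j + if j = fi a then fn a else 0) * (fN a) ^ j) 0 :=
    Primrec.list_foldl (Primrec.const (List.range k)) (Primrec.const 0)
      (Primrec.nat_add.comp (Primrec.fst.comp Primrec.snd)
        (Primrec.nat_mul.comp
          (Primrec.nat_add.comp
            ((primrec_dig m).comp (hc.comp Primrec.fst) (Primrec.snd.comp Primrec.snd))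
            (Primrec.ite (Primrec.eq.comp (Primrec.snd.comp Primrec.snd)
                (hi.comp Primrec.fst))
              (hn.comp Primrec.fst) (Primrec.const 0)))
          (primrec_pow.comp (hN.comp Primrec.fst) (Primrec.snd.comp Primrec.snd)))).to₂
  exact h.of_eq fun a => rfl

theorem primrec_chk (k m : ℕ) (w : List Bool) {α : Type} [Primcodable α]
    {fn fN : α → ℕ} {fl : α → List Bool} (hn : Primrec fn) (hN : Primrec fN)
    (hl : Primrec fl) : Primrec fun a => chk k m w (fn a) (fN a) (fl a) := by
  have hinner : Primrec fun q : (α × ℕ) × ℕ =>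
      ((fl q.1.1).getD (sIdx k m (fn q.1.1) (fN q.1.1) q.1.2 q.2) false == w.getD q.2 false) :=
    Primrec.beq.comp
      ((Primrec.list_getD false).comp (hl.comp (Primrec.fst.comp Primrec.fst))
        (primrec_sIdx k m (hn.comp (Primrec.fst.comp Primrec.fst))
          (hN.comp (Primrec.fst.comp Primrec.fst)) (Primrec.snd.comp Primrec.fst) Primrec.snd))
      ((Primrec.list_getD false).comp (Primrec.const w) Primrec.snd)
  have hmid : Primrec fun q : α × ℕ => (List.range (m ^ k)).all fun c =>
      (fl q.1).getD (sIdx k m (fn q.1) (fN q.1) q.2 c) false == w.getD c false :=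
    primrec_all (Primrec.const (List.range (m ^ k))) hinner.to₂
  exact primrec_all (Primrec.const (List.range k)) hmid.to₂

theorem primrec_good (k m : ℕ) (w : List Bool) : Primrec (good k m w) := by
  have hbody : Primrec fun q : (ℕ × List Bool) × ℕ =>
      (decide (1 ≤ q.2) && decide (q.2 + m ≤ q.1.1) && chk k m w q.2 q.1.1 q.1.2) :=
    primrec_band.comp
      (primrec_band.comp
        (Primrec.nat_le.comp (Primrec.const 1) Primrec.snd).decide
        (Primrec.nat_le.comp (Primrec.nat_add.comp Primrec.snd (Primrec.const m))
          (Primrec.fst.comp Primrec.fst)).decide)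
      (primrec_chk k m w Primrec.snd (Primrec.fst.comp Primrec.fst)
        (Primrec.snd.comp Primrec.fst))
  have hany : Primrec fun p : ℕ × List Bool => (List.range (p.1 + 1)).any fun n =>
      decide (1 ≤ n) && decide (n + m ≤ p.1) && chk k m w n p.1 p.2 :=
    primrec_any (Primrec.list_range.comp
      (Primrec.nat_add.comp Primrec.fst (Primrec.const 1))) hbody.to₂
  exact primrec_band.comp
    (Primrec.eq.comp (Primrec.list_length.comp Primrec.snd)
      (primrec_pow.comp Primrec.fst (Primrec.const k))).decide hany


def tau (k m : ℕ) (w : List Bool) : Fin k × (Fin k → Fin m) → Bool :=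
  fun q => w.getD (finFunctionFinEquiv q.2 : ℕ) false

def lst {k N : ℕ} (g : (Fin k → Fin N) → Bool) : List Bool :=
  List.ofFn fun c : Fin (N ^ k) => g (finFunctionFinEquiv.symm c)

theorem length_lst {k N : ℕ} (g : (Fin k → Fin N) → Bool) : (lst g).length = N ^ k :=
  List.length_ofFn

theorem getD_lst {k N : ℕ} (g : (Fin k → Fin N) → Bool) (v : Fin k → Fin N) :
    (lst g).getD (finFunctionFinEquiv v : ℕ) false = g v := by
  rw [lst, getD_ofFn _ _ (finFunctionFinEquiv v).isLt]
  simp only [Fin.eta, Equiv.symm_apply_apply]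

def iot {k m t : ℕ} (x : Fin t × Fin k × (Fin k → Fin m)) : Fin k → Fin (m * (t + 1)) :=
  fun j => ⟨(x.2.2 j : ℕ) + if j = x.2.1 then m * ((x.1 : ℕ) + 1) else 0, by
    have h1 : (x.2.2 j : ℕ) < m := (x.2.2 j).isLt
    have h2 : (x.1 : ℕ) < t := x.1.isLt
    have h3 : m * ((x.1 : ℕ) + 2) = m * ((x.1 : ℕ) + 1) + m := by ring
    split
    · calc (x.2.2 j : ℕ) + m * ((x.1 : ℕ) + 1) < m * ((x.1 : ℕ) + 2) := by omega
        _ ≤ m * (t + 1) := Nat.mul_le_mul_left m (by omega)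
    · calc (x.2.2 j : ℕ) < m := h1
        _ ≤ m * (t + 1) := Nat.le_mul_of_pos_right m (by omega)⟩

theorem iot_inj {k m t : ℕ} : Function.Injective (iot (k := k) (m := m) (t := t)) := by
  rintro ⟨s, i, u⟩ ⟨s', i', u'⟩ h
  have hj : ∀ j : Fin k, (u j : ℕ) + (if j = i then m * ((s : ℕ) + 1) else 0)
      = (u' j : ℕ) + (if j = i' then m * ((s' : ℕ) + 1) else 0) := fun j =>
    congrArg Fin.val (congrFun h j)
  have hm1 : ∀ a : ℕ, m ≤ m * (a + 1) := fun a => by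
    have h1 : (u i : ℕ) < m := (u i).isLt
    exact Nat.le_mul_of_pos_right m (by omega)
  have hii : i = i' := by
    by_contra hne
    have hji := hj i
    rw [if_pos rfl, if_neg hne] at hji
    have h1 : (u' i : ℕ) < m := (u' i).isLt
    have h2 := hm1 (s : ℕ)
    omega
  subst hii
  have key : ∀ a b x y : ℕ, x < m → y < m → a < b → x + m * (a + 1) ≠ y + m * (b + 1) := by
    intro a b x y hx hy hab heq
    have h1 : m * (a + 2) ≤ m * (b + 1) := Nat.mul_le_mul_left m (by omega)
    have h2 : m * (a + 1) + m = m * (a + 2) := by ring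
    omega
  have hji := hj i
  rw [if_pos rfl, if_pos rfl] at hji
  have hss : (s : ℕ) = (s' : ℕ) := by
    rcases Nat.lt_trichotomy (s : ℕ) (s' : ℕ) with hlt | heq | hgt
    · exact absurd hji (key _ _ _ _ (u i).isLt (u' i).isLt hlt)
    · exact heq
    · exact absurd hji.symm (key _ _ _ _ (u' i).isLt (u i).isLt hgt)
  have hmm : m * ((s : ℕ) + 1) = m * ((s' : ℕ) + 1) := by rw [hss]
  have huu : u = u' := by
    funext j
    have hjj := hj j
    by_cases hcase : j = i
    · rw [if_pos hcase, if_pos hcase, hmm] at hjj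
      exact Fin.ext (by omega)
    · rw [if_neg hcase, if_neg hcase] at hjj
      exact Fin.ext (by omega)
  simp only [Prod.mk.injEq]
  exact ⟨Fin.ext hss, trivial, huu⟩

def BadG (k m t : ℕ) (w : List Bool) : Finset ((Fin k → Fin (m * (t + 1))) → Bool) :=
  Finset.univ.filter fun g =>
    ∀ s : Fin t, ∃ q : Fin k × (Fin k → Fin m), g (iot (s, q)) ≠ tau k m w q

theorem card_BadG_le (k m t : ℕ) (w : List Bool) :
    (BadG k m t w).card ≤
      (2 ^ (k * m ^ k) - 1) ^ t * 2 ^ ((m * (t + 1)) ^ k - t * (k * m ^ k)) := by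
  classical
  let H := Fin k × (Fin k → Fin m) → Bool
  let τ : H := tau k m w
  let C := {v : Fin k → Fin (m * (t + 1)) // v ∉ Set.range (iot (k := k) (m := m) (t := t))}
  let Φ : {g // g ∈ BadG k m t w} → (Fin t → {h : H // h ≠ τ}) × (C → Bool) := fun g =>
    (fun s => ⟨fun q => g.1 (iot (s, q)), fun hcontra => by
        obtain ⟨q, hq⟩ := (Finset.mem_filter.1 g.2).2 s
        exact hq (congrFun hcontra q)⟩,
     fun v => g.1 v.1)
  have hΦ : Function.Injective Φ := by
    intro g₁ g₂ hΦeq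
    apply Subtype.ext; funext v
    by_cases hv : v ∈ Set.range (iot (k := k) (m := m) (t := t))
    · obtain ⟨x, rfl⟩ := hv
      have h1 := congrFun (congrArg Prod.fst hΦeq) x.1
      have h2 := congrFun (congrArg Subtype.val h1) x.2
      simpa using h2
    · exact congrFun (congrArg Prod.snd hΦeq) ⟨v, hv⟩
  have hcard := Fintype.card_le_of_injective Φ hΦ
  rw [Fintype.card_coe] at hcard
  refine hcard.trans (le_of_eq ?_)
  rw [Fintype.card_prod, Fintype.card_fun, Fintype.card_fun]
  have hB : Fintype.card {h : H // h ≠ τ} = 2 ^ (k * m ^ k) - 1 := by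
    have h1 : Fintype.card {h : H // ¬ h = τ} = Fintype.card H - Fintype.card {h : H // h = τ} :=
      Fintype.card_subtype_compl _
    rw [Fintype.card_subtype_eq] at h1
    have h2 : Fintype.card H = 2 ^ (k * m ^ k) := by
      simp [H, Fintype.card_fun]
    rw [h2] at h1
    exact h1
  have hC : Fintype.card C = (m * (t + 1)) ^ k - t * (k * m ^ k) := by
    have h1 : Fintype.card C =
        Fintype.card (Fin k → Fin (m * (t + 1))) -
          Fintype.card {v // v ∈ Set.range (iot (k := k) (m := m) (t := t))} :=
      Fintype.card_subtype_compl _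
    have h2 : Fintype.card {v // v ∈ Set.range (iot (k := k) (m := m) (t := t))}
        = t * (k * m ^ k) := by
      have h3 : Fintype.card (Set.range (iot (k := k) (m := m) (t := t)))
          = Fintype.card (Fin t × Fin k × (Fin k → Fin m)) :=
        Set.card_range_of_injective iot_inj
      rw [h3]
      simp [Fintype.card_fun]
      try ring
    rw [h1, h2]
    congr 1
    simp [Fintype.card_fun]
  rw [hB, hC]
  simp

theorem tk_le (t k : ℕ) : t * k + 1 ≤ (t + 1) ^ k := by
  induction k with
  | zero => simp
  | succ k ih =>
      have h1 : (t * k + 1) * (t + 1) ≤ (t + 1) ^ k * (t + 1) :=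
        Nat.mul_le_mul_right _ ih
      calc t * (k + 1) + 1 = t * k + t + 1 := by ring
        _ ≤ t * k * t + (t * k + t + 1) := Nat.le_add_left _ _
        _ = (t * k + 1) * (t + 1) := by ring
        _ ≤ (t + 1) ^ k * (t + 1) := h1
        _ = (t + 1) ^ (k + 1) := (pow_succ _ _).symm

theorem compl_subset_bad (k m t : ℕ) (hk : 1 ≤ k) (hm : 1 ≤ m) (w : List Bool)
    (hw : w.length = m ^ k) :
    (openClK (k := k) (SS k m w))ᶜ ⊆
      ⋃ g ∈ BadG k m t w, {Z | ArrayAgrees (m * (t + 1)) (lst g) Z} := by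
  intro Z hZ
  set N := m * (t + 1) with hN
  set g : (Fin k → Fin N) → Bool := fun v => Z (fun j => (v j : ℕ)) with hg
  have hagr : ArrayAgrees N (lst g) Z := ⟨length_lst g, fun u => by rw [getD_lst]⟩
  have hgb : g ∈ BadG k m t w := by
    rw [BadG, Finset.mem_filter]
    refine ⟨Finset.mem_univ _, fun s => ?_⟩
    by_contra hcon
    push_neg at hcon
    apply hZ
    refine ⟨(N, lst g), ?_, hagr⟩
    show good k m w (N, lst g) = true
    rw [good_iff]
    refine ⟨length_lst g, m * ((s : ℕ) + 1), Nat.mul_pos hm (Nat.succ_pos _), ?_, ?_⟩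
    · have h1 : m * ((s : ℕ) + 2) ≤ m * (t + 1) := Nat.mul_le_mul_left m (by omega)
      have h2 : m * ((s : ℕ) + 1) + m = m * ((s : ℕ) + 2) := by ring
      omega
    · rw [chk_iff]
      intro i hi cc hcc
      set iF : Fin k := ⟨i, hi⟩ with hiF
      set u : Fin k → Fin m := finFunctionFinEquiv.symm ⟨cc, hcc⟩ with hu
      have hcu : (finFunctionFinEquiv u : ℕ) = cc := by
        rw [hu, Equiv.apply_symm_apply]
      have hidx := sIdx_eq (m * ((s : ℕ) + 1)) N iF u (iot (s, iF, u)) (fun j => rfl)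
      rw [← hcu]
      show (lst g).getD (sIdx k m (m * ((s : ℕ) + 1)) N (iF : ℕ) (finFunctionFinEquiv u : ℕ))
          false = w.getD (finFunctionFinEquiv u : ℕ) false
      rw [hidx, getD_lst]
      exact hcon (iF, u)
  exact Set.mem_biUnion hgb hagr

theorem measure_SS_compl (k m : ℕ) (hk : 1 ≤ k) (hm : 1 ≤ m) (w : List Bool)
    (hw : w.length = m ^ k) (μ : MeasureTheory.Measure ((Fin k → ℕ) → Bool))
    (hμ : IsUniformMeasureK μ) : μ ((openClK (k := k) (SS k m w))ᶜ) = 0 := by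
  set c := k * m ^ k with hc
  set b := 2 ^ c - 1 with hb
  set r : ℝ≥0∞ := (b : ℝ≥0∞) * 2⁻¹ ^ c with hr
  have hpowc : (0 : ℕ) < 2 ^ c := Nat.pow_pos (by norm_num)
  have hbound : ∀ t : ℕ, μ ((openClK (k := k) (SS k m w))ᶜ) ≤ r ^ t := by
    intro t
    set N := m * (t + 1) with hN
    set L := N ^ k with hL
    have htcL : t * c ≤ L := by
      have h1 : t * k ≤ (t + 1) ^ k := by have := tk_le t k; omega
      have h2 : t * k * m ^ k ≤ (t + 1) ^ k * m ^ k := Nat.mul_le_mul_right _ h1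
      calc t * c = t * k * m ^ k := by rw [hc]; ring
        _ ≤ (t + 1) ^ k * m ^ k := h2
        _ = L := by rw [hL, hN, mul_pow]; ring
    have h1 : μ ((openClK (k := k) (SS k m w))ᶜ) ≤
        ∑ g ∈ BadG k m t w, μ {Z | ArrayAgrees N (lst g) Z} :=
      (measure_mono (compl_subset_bad k m t hk hm w hw)).trans
        (measure_biUnion_finset_le _ _)
    have h2 : ∀ g ∈ BadG k m t w, μ {Z | ArrayAgrees N (lst g) Z} = 2⁻¹ ^ L :=
      fun g _ => hμ N (lst g) (length_lst g)
    rw [Finset.sum_congr rfl h2, Finset.sum_const, nsmul_eq_mul] at h1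
    have hcard := card_BadG_le k m t w
    have hsplit : (2⁻¹ : ℝ≥0∞) ^ L = 2⁻¹ ^ (L - t * c) * 2⁻¹ ^ (t * c) := by
      rw [← pow_add, Nat.sub_add_cancel htcL]
    have hone : (2 : ℝ≥0∞) ^ (L - t * c) * 2⁻¹ ^ (L - t * c) = 1 := by
      rw [← mul_pow, ENNReal.mul_inv_cancel (by norm_num) (by norm_num), one_pow]
    calc μ ((openClK (k := k) (SS k m w))ᶜ) ≤ ((BadG k m t w).card : ℝ≥0∞) * 2⁻¹ ^ L := h1
      _ ≤ ((b ^ t * 2 ^ (L - t * c) : ℕ) : ℝ≥0∞) * 2⁻¹ ^ L := by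
          exact mul_le_mul_left (by exact_mod_cast hcard) _
      _ = (b : ℝ≥0∞) ^ t * 2 ^ (L - t * c) * 2⁻¹ ^ L := by push_cast; ring
      _ = (b : ℝ≥0∞) ^ t * ((2 ^ (L - t * c) * 2⁻¹ ^ (L - t * c)) * 2⁻¹ ^ (t * c)) := by
          rw [hsplit]; ring
      _ = (b : ℝ≥0∞) ^ t * 2⁻¹ ^ (t * c) := by rw [hone, one_mul]
      _ = (b : ℝ≥0∞) ^ t * (2⁻¹ ^ c) ^ t := by rw [mul_comm t c, pow_mul]
      _ = r ^ t := (mul_pow _ _ _).symm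
  have hrlt : r < 1 := by
    have hb2 : (b : ℝ≥0∞) < (2 : ℝ≥0∞) ^ c := by
      have h2 : ((2 : ℝ≥0∞)) ^ c = ((2 ^ c : ℕ) : ℝ≥0∞) := by push_cast; ring
      rw [h2]
      exact_mod_cast Nat.sub_lt hpowc one_pos
    have hne0 : ((2 : ℝ≥0∞)⁻¹) ^ c ≠ 0 := by
      apply pow_ne_zero
      simp
    have hnetop : ((2 : ℝ≥0∞)⁻¹) ^ c ≠ ⊤ := by
      apply ENNReal.pow_ne_top
      simp
    calc r = (b : ℝ≥0∞) * 2⁻¹ ^ c := hr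
      _ < 2 ^ c * 2⁻¹ ^ c := ENNReal.mul_lt_mul_left hne0 hnetop hb2
      _ = 1 := by
          rw [← mul_pow, ENNReal.mul_inv_cancel (by norm_num) (by norm_num), one_pow]
  have htends := ENNReal.tendsto_pow_atTop_nhds_zero_of_lt_one hrlt
  have hle := ge_of_tendsto' htends hbound
  exact le_antisymm hle zero_le

theorem ce_SS (k m : ℕ) (w : List Bool) : CEArrays (SS k m w) := by
  refine ⟨fun e => (Encodable.decode (α := ℕ × List Bool) e).bind
    fun p => if good k m w p = true then some p else none, ?_, ?_⟩
  · refine Primrec.to_comp ?_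
    refine Primrec.option_bind Primrec.decode ?_
    refine (Primrec.ite (Primrec.eq.comp ((primrec_good k m w).comp Primrec.snd)
      (Primrec.const true)) (Primrec.option_some.comp Primrec.snd) (Primrec.const none)).to₂
  · ext p
    constructor
    · intro hp
      refine ⟨Encodable.encode p, ?_⟩
      have hg : good k m w p = true := hp
      simp [Encodable.encodek, hg]
    · rintro ⟨n, hn⟩
      simp only [Option.bind_eq_some_iff] at hn
      obtain ⟨q, _, hq⟩ := hn
      by_cases h : good k m w q = true
      · simp [h] at hq; subst hq; exact h
      · simp [h] at hq

end MRAux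

open MRAux in

/-- Every weakly (Kurtz) random point of `X_k = {0,1}^(ℕ^k)` is multiply recurrent in
every non-empty clopen subset of `X_k`. -/
theorem kurtzRandomK_multiplyRecurrent_clopen (k : ℕ) (hk : 1 ≤ k)
    (μ : Measure ((Fin k → ℕ) → Bool)) (hμ : IsUniformMeasureK μ)
    (P : Set ((Fin k → ℕ) → Bool))
    (hP : ∃ F : Finset (ℕ × List Bool), P = openClK ↑F) (hPne : P.Nonempty)
    (Z : (Fin k → ℕ) → Bool) (hZ : KurtzRandomK μ Z) :
    MultiplyRecurrentK P Z := by
  obtain ⟨F, rfl⟩ := hP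
  obtain ⟨Z₀, p₀, hp₀F, hp₀⟩ := hPne
  set m := p₀.1 with hmdef
  set w := p₀.2 with hwdef
  have hw : w.length = m ^ k := hp₀.1
  by_cases hm : m = 0
  · refine ⟨1, le_refl 1, Set.mem_iInter.2 fun i => ?_⟩
    show (shiftK i)^[1] Z ∈ openClK (↑F)
    refine ⟨p₀, hp₀F, hp₀.1, fun u => ?_⟩
    exact absurd (u ⟨0, hk⟩).isLt (by omega)
  · have hm1 : 1 ≤ m := Nat.one_le_iff_ne_zero.2 hm
    have hQpi : Pi01ClassK ((openClK (k := k) (SS k m w))ᶜ) := ⟨SS k m w, ce_SS k m w, rfl⟩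
    have hQ0 := measure_SS_compl k m hk hm1 w hw μ hμ
    have hZin : Z ∈ openClK (k := k) (SS k m w) := by
      have h := hZ _ hQpi hQ0
      simpa using h
    obtain ⟨p, hpS, hagr⟩ := hZin
    have hps' : good k m w p = true := hpS
    obtain ⟨hlen, n, hn1, hnm, hchk⟩ := good_iff.1 hps'
    refine ⟨n, hn1, Set.mem_iInter.2 fun i => ?_⟩
    show (shiftK i)^[n] Z ∈ openClK (↑F)
    refine ⟨p₀, hp₀F, hw, fun u => ?_⟩
    rw [shiftK_iterate]
    set N := p.1 with hNdef
    set q : Fin k → Fin N := fun j => ⟨(u j : ℕ) + if j = i then n else 0, by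
      have := (u j).isLt
      split <;> omega⟩ with hq
    have hidx := sIdx_eq n N i u q (fun j => rfl)
    have h1 := chk_iff.1 hchk (i : ℕ) i.isLt (finFunctionFinEquiv u : ℕ)
      (finFunctionFinEquiv u).isLt
    rw [hidx] at h1
    have h2 := hagr.2 q
    rw [h2] at h1
    rw [← h1]
    congr 1
    funext j
    show ((u j : ℕ) + if j = i then n else 0) = if j = i then (u j : ℕ) + n else (u j : ℕ)
    by_cases hcase : j = i <;> simp [hcase]
end

section
/- Every point in a Kronecker system is 1-recurrent: if G is a compact Hausdorff topological group, a ∈ G, and T_a : G → G is defined by T_a(x) = a · x, then for every x ∈ G and every open neighbourhood U of x there is n ≥ 1 such that T_a^n(x) ∈ U (equivalently, a^n · x ∈ U). -/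
open Topology

/-- Every point in a Kronecker system is `1`-recurrent: for a compact Hausdorff
topological group `G`, `a ∈ G`, and the translation `T_a x = a * x`, every point `x`
returns to each of its open neighbourhoods, i.e. `a ^ n * x ∈ U` for some `n ≥ 1`. -/
theorem kronecker_one_recurrent {G : Type*} [Group G] [TopologicalSpace G]
    [IsTopologicalGroup G] [CompactSpace G] [T2Space G] (a : G) (x : G)
    (U : Set G) (hU : IsOpen U) (hxU : x ∈ U) :
    ∃ n : ℕ, 1 ≤ n ∧ a ^ n * x ∈ U := by
  -- It suffices to find n ≥ 1 with a^n in the neighborhood V of 1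
  set V : Set G := (· * x) ⁻¹' U with hV
  have hV1 : V ∈ 𝓝 (1 : G) := by
    have : ContinuousAt (· * x) (1 : G) := (continuous_mul_right x).continuousAt
    exact this (by simpa using hU.mem_nhds hxU)
  obtain ⟨W, hW, hWs⟩ := exists_nhds_split_inv hV1
  -- cluster point of the sequence a^n
  obtain ⟨y, hy⟩ := exists_clusterPt_of_compactSpace
    (Filter.map (fun n : ℕ => a ^ n) Filter.atTop)
  have hfreq : ∃ᶠ n in Filter.atTop, a ^ n * y⁻¹ ∈ W := by
    have hNy : (· * y⁻¹) ⁻¹' W ∈ 𝓝 y := by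
      have : ContinuousAt (· * y⁻¹) y := (continuous_mul_right y⁻¹).continuousAt
      exact this (by simpa using hW)
    have hy' : MapClusterPt y Filter.atTop (fun n : ℕ => a ^ n) := hy
    exact mapClusterPt_iff_frequently.mp hy' _ hNy
  obtain ⟨m, hm, hm1⟩ :=
    (hfreq.and_eventually (Filter.eventually_ge_atTop 1)).exists
  obtain ⟨n, hn, hnm⟩ :=
    (hfreq.and_eventually (Filter.eventually_ge_atTop (m + 1))).exists
  refine ⟨n - m, by omega, ?_⟩
  have key : a ^ (n - m) ∈ V := by
    have h1 : a ^ n = a ^ (n - m) * a ^ m := by rw [← pow_add]; congr 1; omega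
    have heq : (a ^ n * y⁻¹) / (a ^ m * y⁻¹) = a ^ (n - m) := by
      rw [h1]; simp [div_eq_mul_inv, mul_inv_rev, mul_assoc]
    rw [← heq]
    exact hWs _ hn _ hm
  exact key
end

section
/- Every point in a Kronecker system is multiply recurrent: if G is a compact Hausdorff topological group and a ∈ G, then for every x ∈ G, every k ≥ 1, and every open neighbourhood U of x, there is n ≥ 1 such that a^{in} · x ∈ U for every i with 1 ≤ i ≤ k. -/
/-- Every point in a Kronecker system is multiply recurrent: for a compact Hausdorff
topological group `G`, `a ∈ G`, every `x ∈ G`, every `k ≥ 1` and every open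
neighbourhood `U` of `x`, there is `n ≥ 1` with `a ^ (i * n) * x ∈ U` for all
`1 ≤ i ≤ k`. -/
theorem kronecker_multiply_recurrent {G : Type*} [Group G] [TopologicalSpace G]
    [IsTopologicalGroup G] [CompactSpace G] [T2Space G] (a : G) (x : G)
    (k : ℕ) (hk : 1 ≤ k) (U : Set G) (hU : IsOpen U) (hxU : x ∈ U) :
    ∃ n : ℕ, 1 ≤ n ∧ ∀ i : ℕ, 1 ≤ i → i ≤ k → a ^ (i * n) * x ∈ U := by
  -- `V` is the set of `g` with `g * x ∈ U`; it is a neighbourhood of `1`.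
  set V : Set G := (fun g => g * x) ⁻¹' U with hV
  have hV1 : V ∈ nhds (1 : G) := by
    have : ContinuousAt (fun g : G => g * x) 1 := by fun_prop
    exact this (by simpa using hU.mem_nhds hxU)
  -- The set of `g` with `g ^ i ∈ V` for all `1 ≤ i ≤ k` is a neighbourhood of `1`.
  have hW : ∀ᶠ g in nhds (1 : G), ∀ i ∈ Finset.Icc 1 k, g ^ i ∈ V := by
    refine (Filter.eventually_all_finset _).mpr fun i _ => ?_
    have hc : ContinuousAt (fun g : G => g ^ i) 1 := by fun_prop
    exact hc (by simpa using hV1)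
  -- The identity is a cluster point of `n ↦ a ^ n`, so `a ^ n` visits this set.
  have hcl := mapClusterPt_one_atTop_pow a
  have hfreq : ∃ᶠ n in Filter.atTop, ∀ i ∈ Finset.Icc 1 k, (a ^ n) ^ i ∈ V :=
    mapClusterPt_iff_frequently.mp hcl _ hW
  obtain ⟨n, hn1, hn⟩ := (Filter.frequently_atTop.mp hfreq) 1
  refine ⟨n, hn1, fun i hi1 hik => ?_⟩
  have := hn i (Finset.mem_Icc.mpr ⟨hi1, hik⟩)
  simpa [hV, mul_comm i n, pow_mul] using this
end
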